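/- arXiv:1310.6442 — 5 statements merged into one kernel-verified Lean document; each statement's English description precedes it below -/
import Mathlib

section
/- For any divergence-free vector field w = (w¹, w², w³) in H^{1/2}(ℝ³) and any θ ∈ (0, 1/2), the quantity ‖∂₃w³‖_{H_θ} is bounded by a constant times ‖w‖_{H^{1/2}}, where H_θ denotes the anisotropic Sobolev space H^{-1/2+θ, -θ}. -/
open MeasureTheory ENNReal
open scoped NNReal

noncomputable section

/-- Horizontal frequency modulus `|ξ_h| = √(ξ₁² + ξ₂²)`. -/
def hmod (ξ : Fin 3 → ℝ) : ℝ := Real.sqrt (ξ 0 ^ 2 + ξ 1 ^ 2)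

/-- Full frequency modulus `|ξ| = √(ξ₁² + ξ₂² + ξ₃²)`. -/
def fmod (ξ : Fin 3 → ℝ) : ℝ := Real.sqrt (ξ 0 ^ 2 + ξ 1 ^ 2 + ξ 2 ^ 2)

lemma key (θ : ℝ) (hθ0 : 0 < θ) (hθ : θ < 1/2) (ξ : Fin 3 → ℝ) (W : Fin 3 → ℂ)
    (hdiv : (ξ 0 : ℂ) * W 0 + (ξ 1 : ℂ) * W 1 + (ξ 2 : ℂ) * W 2 = 0) :
    hmod ξ ^ (-1 + 2*θ) * |ξ 2| ^ (-(2*θ)) * (ξ 2) ^ 2 * ‖W 2‖ ^ 2 ≤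
      fmod ξ * (‖W 0‖ ^ 2 + ‖W 1‖ ^ 2 + ‖W 2‖ ^ 2) := by
  set a := ‖W 0‖ with ha
  set b := ‖W 1‖ with hb
  set c := ‖W 2‖ with hc
  have ha0 : 0 ≤ a := norm_nonneg _
  have hb0 : 0 ≤ b := norm_nonneg _
  have hc0 : 0 ≤ c := norm_nonneg _
  have hh0 : 0 ≤ hmod ξ := Real.sqrt_nonneg _
  have hrhs0 : 0 ≤ fmod ξ * (a ^ 2 + b ^ 2 + c ^ 2) := by
    apply mul_nonneg (Real.sqrt_nonneg _); positivity
  -- divergence consequence: |ξ₂| * c ≤ hmod ξ * √(a²+b²)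
  have hdiv2 : (ξ 2 : ℂ) * W 2 = -((ξ 0 : ℂ) * W 0 + (ξ 1 : ℂ) * W 1) := by
    linear_combination hdiv
  have hCS : |ξ 2| * c ≤ hmod ξ * Real.sqrt (a ^ 2 + b ^ 2) := by
    have h1 : ‖(ξ 2 : ℂ) * W 2‖ ≤ |ξ 0| * a + |ξ 1| * b := by
      rw [hdiv2, norm_neg]
      calc ‖(ξ 0 : ℂ) * W 0 + (ξ 1 : ℂ) * W 1‖ ≤ ‖(ξ 0 : ℂ) * W 0‖ + ‖(ξ 1 : ℂ) * W 1‖ :=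
            norm_add_le _ _
        _ = |ξ 0| * a + |ξ 1| * b := by
            simp [norm_mul, Complex.norm_real, Real.norm_eq_abs, ha, hb]
    have h2 : ‖(ξ 2 : ℂ) * W 2‖ = |ξ 2| * c := by
      simp [norm_mul, Complex.norm_real, Real.norm_eq_abs, hc]
    have h3 : |ξ 0| * a + |ξ 1| * b ≤ hmod ξ * Real.sqrt (a ^ 2 + b ^ 2) := by
      have hsq : (|ξ 0| * a + |ξ 1| * b) ^ 2 ≤ (ξ 0 ^ 2 + ξ 1 ^ 2) * (a ^ 2 + b ^ 2) := by
        nlinarith [sq_nonneg (|ξ 0| * b - |ξ 1| * a), sq_abs (ξ 0), sq_abs (ξ 1),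
          abs_nonneg (ξ 0), abs_nonneg (ξ 1)]
      rw [hmod, ← Real.sqrt_mul (by positivity)]
      rw [show |ξ 0| * a + |ξ 1| * b =
          Real.sqrt ((|ξ 0| * a + |ξ 1| * b) ^ 2) from (Real.sqrt_sq (by positivity)).symm]
      exact Real.sqrt_le_sqrt hsq
    rw [h2] at h1; linarith
  -- degenerate cases
  rcases eq_or_lt_of_le hc0 with hcz | hcpos
  · have hL : hmod ξ ^ (-1 + 2*θ) * |ξ 2| ^ (-(2*θ)) * ξ 2 ^ 2 * c ^ 2 = 0 := by
      rw [← hcz]; ring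
    rw [hL]; exact hrhs0
  rcases eq_or_ne (ξ 2) 0 with htz | htnz
  · have hL : hmod ξ ^ (-1 + 2*θ) * |ξ 2| ^ (-(2*θ)) * ξ 2 ^ 2 * c ^ 2 = 0 := by
      rw [htz]; ring
    rw [hL]; exact hrhs0
  have htpos : 0 < |ξ 2| := abs_pos.mpr htnz
  have hhpos : 0 < hmod ξ := by
    rcases eq_or_lt_of_le hh0 with h | h
    · exfalso
      have := hCS
      rw [← h, zero_mul] at this
      nlinarith
    · exact h
  set h := hmod ξ
  set t := |ξ 2|
  set ab := a ^ 2 + b ^ 2 with hab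
  have hab0 : (0:ℝ) ≤ ab := by positivity
  -- algebraic identity
  have hc2 : (c:ℝ) ^ 2 = c ^ ((2:ℝ)) := by
    rw [← Real.rpow_natCast c 2]; norm_num
  have ht2 : (ξ 2) ^ 2 = t ^ ((2:ℝ)) := by
    rw [← sq_abs (ξ 2), ← Real.rpow_natCast t 2]; norm_num
  have E1 : t ^ (-(2*θ)) * ξ 2 ^ 2 * c ^ 2 = (t * c) ^ (2 - 2*θ) * (c ^ 2) ^ θ := by
    have L : t ^ (-(2*θ)) * ξ 2 ^ 2 * c ^ 2 = t ^ (2 - 2*θ) * c ^ ((2:ℝ)) := by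
      rw [ht2, hc2, ← Real.rpow_add htpos, show -(2*θ) + 2 = 2 - 2*θ by ring]
    have R : (t * c) ^ (2 - 2*θ) * (c ^ 2) ^ θ = t ^ (2 - 2*θ) * c ^ ((2:ℝ)) := by
      rw [Real.mul_rpow htpos.le hc0, hc2, ← Real.rpow_mul hc0, mul_assoc,
        ← Real.rpow_add hcpos, show 2 - 2*θ + 2*θ = (2:ℝ) by ring]
    rw [L, R]
  have E2 : (t * c) ^ (2 - 2*θ) ≤ (h * Real.sqrt ab) ^ (2 - 2*θ) :=
    Real.rpow_le_rpow (by positivity) hCS (by linarith)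
  have E3 : (h * Real.sqrt ab) ^ (2 - 2*θ) = h ^ (2 - 2*θ) * ab ^ (1 - θ) := by
    rw [Real.mul_rpow hhpos.le (Real.sqrt_nonneg _), Real.sqrt_eq_rpow,
      ← Real.rpow_mul hab0, show 1/2 * (2 - 2*θ) = 1 - θ by ring]
  have E4 : h ^ (-1 + 2*θ) * h ^ (2 - 2*θ) = h := by
    rw [← Real.rpow_add hhpos, show -1 + 2*θ + (2 - 2*θ) = (1:ℝ) by ring, Real.rpow_one]
  have E5 : ab ^ (1 - θ) * (c ^ 2) ^ θ ≤ ab + c ^ 2 := by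
    have h5 := Real.geom_mean_le_arith_mean2_weighted (w₁ := 1 - θ) (w₂ := θ)
      (p₁ := ab) (p₂ := c ^ 2) (by linarith) hθ0.le hab0 (by positivity) (by ring)
    nlinarith [mul_nonneg hθ0.le hab0, mul_nonneg hθ0.le (sq_nonneg c)]
  have E6 : h ≤ fmod ξ := Real.sqrt_le_sqrt (by nlinarith [sq_nonneg (ξ 2)])
  calc h ^ (-1 + 2*θ) * t ^ (-(2*θ)) * ξ 2 ^ 2 * c ^ 2
      = h ^ (-1 + 2*θ) * ((t * c) ^ (2 - 2*θ) * (c ^ 2) ^ θ) := by rw [← E1]; ring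
    _ ≤ h ^ (-1 + 2*θ) * ((h * Real.sqrt ab) ^ (2 - 2*θ) * (c ^ 2) ^ θ) := by
        apply mul_le_mul_of_nonneg_left _ (by positivity)
        exact mul_le_mul_of_nonneg_right E2 (by positivity)
    _ = h * (ab ^ (1 - θ) * (c ^ 2) ^ θ) := by rw [E3, ← mul_assoc, ← mul_assoc, E4]; ring
    _ ≤ h * (ab + c ^ 2) := mul_le_mul_of_nonneg_left E5 hhpos.le
    _ ≤ fmod ξ * (a ^ 2 + b ^ 2 + c ^ 2) := by
        rw [hab]
        apply mul_le_mul E6 (by linarith) (by positivity) (Real.sqrt_nonneg _)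


/-- For a divergence-free vector field `w ∈ H^{1/2}(ℝ³)` (described on the Fourier side by
`W = ŵ` with `ξ₁Ŵ¹ + ξ₂Ŵ² + ξ₃Ŵ³ = 0`) and `θ ∈ (0,1/2)`, one has
`‖∂₃w³‖_{H_θ} ≤ C ‖w‖_{H^{1/2}}`, where `H_θ = H^{-1/2+θ,-θ}`; stated here with squared norms:
`∫ |ξ_h|^{-1+2θ}|ξ₃|^{-2θ} |ξ₃|² |Ŵ³|² dξ ≤ C ∫ |ξ| |Ŵ|² dξ`. -/
theorem stmt2 (θ : ℝ) (hθ0 : 0 < θ) (hθ : θ < 1/2) :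
    ∃ C : ℝ≥0, 0 < C ∧ ∀ W : (Fin 3 → ℝ) → (Fin 3 → ℂ),
      (∀ ξ, ∑ i, (ξ i : ℂ) * W ξ i = 0) →
      ∫⁻ ξ, ENNReal.ofReal (hmod ξ ^ (-1 + 2*θ) * |ξ 2| ^ (-(2*θ)) * (ξ 2) ^ 2)
          * (‖W ξ 2‖₊ : ℝ≥0∞) ^ 2
        ≤ C * ∫⁻ ξ, ENNReal.ofReal (fmod ξ) * ∑ i, (‖W ξ i‖₊ : ℝ≥0∞) ^ 2 := by
  refine ⟨1, one_pos, fun W hdivW => ?_⟩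
  rw [ENNReal.coe_one, one_mul]
  apply lintegral_mono
  intro ξ
  have hdiv : (ξ 0 : ℂ) * W ξ 0 + (ξ 1 : ℂ) * W ξ 1 + (ξ 2 : ℂ) * W ξ 2 = 0 := by
    have := hdivW ξ
    rwa [Fin.sum_univ_three] at this
  have hw0 : 0 ≤ hmod ξ ^ (-1 + 2*θ) * |ξ 2| ^ (-(2*θ)) * (ξ 2) ^ 2 := by
    have := Real.sqrt_nonneg (ξ 0 ^ 2 + ξ 1 ^ 2)
    have h1 : (0:ℝ) ≤ hmod ξ ^ (-1 + 2*θ) := Real.rpow_nonneg (Real.sqrt_nonneg _) _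
    have h2 : (0:ℝ) ≤ |ξ 2| ^ (-(2*θ)) := Real.rpow_nonneg (abs_nonneg _) _
    positivity
  dsimp only
  rw [Fin.sum_univ_three]
  simp only [← enorm_eq_nnnorm, ← ofReal_norm, ← ENNReal.ofReal_pow (norm_nonneg _)]
  rw [← ENNReal.ofReal_mul hw0, ← ENNReal.ofReal_add (by positivity) (by positivity),
    ← ENNReal.ofReal_add (by positivity) (by positivity),
    ← ENNReal.ofReal_mul (show (0:ℝ) ≤ fmod ξ from Real.sqrt_nonneg _)]
  exact ENNReal.ofReal_le_ofReal (key θ hθ0 hθ ξ (W ξ) hdiv)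
end
end

section
/- Let a : ℝ³ → ℝ be a measurable function such that a_{3/4} := a|a|^{-1/4} belongs to L²(ℝ³) with ∇(a_{3/4}) ∈ L²(ℝ³). Then ‖∇a‖_{L^{3/2}} ≤ C ‖∇a_{3/4}‖_{L²} · ‖a_{3/4}‖_{L²}^{1/3}. -/
open MeasureTheory ENNReal
open scoped NNReal

noncomputable section

/-- `a_{3/4} = sign(a) |a|^{3/4}`. -/
def aPow34 (a : (Fin 3 → ℝ) → ℝ) (x : Fin 3 → ℝ) : ℝ :=
  Real.sign (a x) * |a x| ^ ((3:ℝ)/4)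

/-- the auxiliary function `g t = t |t|^{1/3}` -/
def gFun (t : ℝ) : ℝ := t * |t| ^ ((1:ℝ)/3)

lemma hasDerivAt_gFun_pos {t : ℝ} (ht : 0 < t) :
    HasDerivAt gFun ((4/3) * |t| ^ ((1:ℝ)/3)) t := by
  have h : HasDerivAt (fun s : ℝ => s ^ ((4:ℝ)/3)) ((4/3) * t ^ ((4:ℝ)/3 - 1)) t :=
    Real.hasDerivAt_rpow_const (Or.inl ht.ne')
  have heq : gFun =ᶠ[nhds t] fun s : ℝ => s ^ ((4:ℝ)/3) := by
    filter_upwards [eventually_gt_nhds ht] with s hs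
    rw [gFun, abs_of_pos hs, ← Real.rpow_one_add' hs.le (by norm_num)]
    norm_num
  have h2 := h.congr_of_eventuallyEq heq
  refine h2.congr_deriv ?_
  rw [abs_of_pos ht]
  norm_num

lemma gFun_neg (s : ℝ) : gFun (-s) = - gFun s := by
  simp [gFun, abs_neg, neg_mul]

lemma hasDerivAt_gFun (t : ℝ) :
    HasDerivAt gFun ((4/3) * |t| ^ ((1:ℝ)/3)) t := by
  rcases lt_trichotomy t 0 with ht | ht | ht
  · have h1 : HasDerivAt gFun ((4/3) * |(-t)| ^ ((1:ℝ)/3)) (-t) :=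
      hasDerivAt_gFun_pos (by linarith)
    have h2 := ((h1.comp t (hasDerivAt_neg t))).neg
    have hfe : (fun s : ℝ => -(gFun (-s))) = gFun := by
      funext s; rw [gFun_neg, neg_neg]
    rw [Function.comp_def] at h2
    simp only [Pi.neg_def] at h2
    rw [hfe] at h2
    refine h2.congr_deriv ?_
    rw [abs_neg]
    ring
  · subst ht
    rw [hasDerivAt_iff_tendsto_slope]
    have h00 : |(0:ℝ)| ^ ((1:ℝ)/3) = 0 := by
      rw [abs_zero, Real.zero_rpow (by norm_num : ((1:ℝ)/3) ≠ 0)]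
    have hcongr : ∀ s ∈ ({(0:ℝ)}ᶜ : Set ℝ), slope gFun 0 s = |s| ^ ((1:ℝ)/3) := by
      intro s hs
      have hs0 : s ≠ 0 := hs
      have : slope gFun 0 s = s * |s| ^ ((1:ℝ)/3) / s := by
        simp [slope_def_field, gFun]
      rw [this, mul_comm, mul_div_assoc, div_self hs0, mul_one]
    have htend : Filter.Tendsto (fun s : ℝ => |s| ^ ((1:ℝ)/3)) (nhdsWithin 0 {(0:ℝ)}ᶜ)
        (nhds ((0:ℝ))) := by
      have hc : ContinuousAt (fun s : ℝ => |s| ^ ((1:ℝ)/3)) 0 := by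
        apply ContinuousAt.rpow_const (continuous_abs.continuousAt)
        right; norm_num
      have h2 := hc.continuousWithinAt (s := {(0:ℝ)}ᶜ)
      simpa only [ContinuousWithinAt, h00] using h2
    have : (4/3 : ℝ) * |(0:ℝ)| ^ ((1:ℝ)/3) = 0 := by rw [h00, mul_zero]
    rw [this]
    refine htend.congr' ?_
    filter_upwards [self_mem_nhdsWithin] with s hs
    exact (hcongr s hs).symm
  · exact hasDerivAt_gFun_pos ht

lemma gFun_aPow34 (a : (Fin 3 → ℝ) → ℝ) (x : Fin 3 → ℝ) :
    gFun (aPow34 a x) = a x := by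
  rcases eq_or_ne (a x) 0 with h0 | h0
  · simp [gFun, aPow34, h0]
  · have habs : |aPow34 a x| = |a x| ^ ((3:ℝ)/4) := by
      rw [aPow34, abs_mul, abs_of_nonneg (Real.rpow_nonneg (abs_nonneg _) _)]
      rcases h0.lt_or_gt with h | h
      · rw [Real.sign_of_neg h]; norm_num
      · rw [Real.sign_of_pos h]; norm_num
    rw [gFun, habs, ← Real.rpow_mul (abs_nonneg _), aPow34, mul_assoc,
      ← Real.rpow_add (abs_pos.mpr h0)]
    norm_num
    rcases h0.lt_or_gt with h | h
    · rw [Real.sign_of_neg h, abs_of_neg h]; ring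
    · rw [Real.sign_of_pos h, abs_of_pos h]; ring

/-- If `a_{3/4} := sign(a)|a|^{3/4} ∈ L²(ℝ³)` with `∇a_{3/4} ∈ L²(ℝ³)`, then
`‖∇a‖_{L^{3/2}} ≤ C ‖∇a_{3/4}‖_{L²} ‖a_{3/4}‖_{L²}^{1/3}`. -/
theorem stmt4 :
    ∃ C : ℝ≥0, 0 < C ∧ ∀ a : (Fin 3 → ℝ) → ℝ,
      Differentiable ℝ a → Differentiable ℝ (aPow34 a) →
      MemLp (aPow34 a) 2 volume →
      MemLp (fun x => ‖fderiv ℝ (aPow34 a) x‖) 2 volume →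
      eLpNorm (fun x => ‖fderiv ℝ a x‖) (ENNReal.ofReal (3/2)) volume
        ≤ C * eLpNorm (fun x => ‖fderiv ℝ (aPow34 a) x‖) 2 volume
            * (eLpNorm (aPow34 a) 2 volume) ^ ((1:ℝ)/3) := by
  refine ⟨2, by norm_num, ?_⟩
  intro a ha h34 hL2 hDL2
  set a34 := aPow34 a with ha34
  set F : (Fin 3 → ℝ) → ℝ := fun x => ‖fderiv ℝ a34 x‖ with hF
  set G : (Fin 3 → ℝ) → ℝ := fun x => |a34 x| ^ ((1:ℝ)/3) with hG
  -- pointwise identity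
  have key : ∀ x, ‖fderiv ℝ a x‖ = (4/3 : ℝ) * (G x * F x) := by
    intro x
    have hfd : HasFDerivAt a34 (fderiv ℝ a34 x) x := (h34 x).hasFDerivAt
    have hg : HasDerivAt gFun ((4/3) * |a34 x| ^ ((1:ℝ)/3)) (a34 x) :=
      hasDerivAt_gFun (a34 x)
    have hcomp := hg.comp_hasFDerivAt x hfd
    have hfun : gFun ∘ a34 = a := by
      funext y; exact gFun_aPow34 a y
    rw [hfun] at hcomp
    rw [hcomp.fderiv, norm_smul, Real.norm_eq_abs,
      abs_of_nonneg (by positivity : (0:ℝ) ≤ (4/3) * |a34 x| ^ ((1:ℝ)/3))]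
    ring
  -- rewrite LHS
  have hcongr : eLpNorm (fun x => ‖fderiv ℝ a x‖) (ENNReal.ofReal (3/2)) volume
      = eLpNorm ((4/3 : ℝ) • fun x => G x * F x) (ENNReal.ofReal (3/2)) volume := by
    apply eLpNorm_congr_ae
    filter_upwards with x
    simp only [Pi.smul_apply, smul_eq_mul]
    exact key x
  rw [hcongr, eLpNorm_const_smul]
  -- Hölder
  have hGmeas : AEStronglyMeasurable G volume := by
    have : Continuous G := by
      apply Continuous.rpow_const (continuous_abs.comp h34.continuous)
      intro x; right; norm_num
    exact this.aestronglyMeasurable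
  have hFmeas : AEStronglyMeasurable F volume := hDL2.1
  have hpqr : 1 / (ENNReal.ofReal (3/2)) = 1 / 6 + 1 / (2 : ℝ≥0∞) := by
    rw [show ENNReal.ofReal (3/2) = 3 / 2 by
      rw [ENNReal.ofReal_div_of_pos (by norm_num)]; norm_num]
    rw [one_div, ENNReal.inv_div (by norm_num) (by norm_num)]
    rw [show (1:ℝ≥0∞)/2 = 3/6 by
      rw [ENNReal.div_eq_div_iff (by norm_num) (by norm_num) (by norm_num) (by norm_num)]; norm_num]
    rw [ENNReal.div_add_div_same]
    rw [ENNReal.div_eq_div_iff (by norm_num) (by norm_num) (by norm_num) (by norm_num)]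
    norm_num
  have hHolder : eLpNorm (fun x => G x * F x) (ENNReal.ofReal (3/2)) volume
      ≤ eLpNorm G 6 volume * eLpNorm F 2 volume := by
    haveI : HolderTriple 6 2 (ENNReal.ofReal (3/2)) :=
      ⟨by have h := hpqr.symm; simp only [one_div] at h; exact h⟩
    have := eLpNorm_smul_le_mul_eLpNorm (μ := volume) hFmeas hGmeas (p := 6) (q := 2)
      (r := ENNReal.ofReal (3/2))
    exact this
  -- compute eLpNorm G 6
  have hG6 : eLpNorm G 6 volume = (eLpNorm a34 2 volume) ^ ((1:ℝ)/3) := by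
    have : G = fun x => ‖a34 x‖ ^ ((1:ℝ)/3) := by
      funext x; rw [hG, Real.norm_eq_abs]
    rw [this, eLpNorm_norm_rpow a34 (by norm_num : (0:ℝ) < 1/3)]
    congr 1
    rw [show ENNReal.ofReal ((1:ℝ)/3) = 3⁻¹ by
      rw [ENNReal.ofReal_div_of_pos (by norm_num)]; norm_num [one_div]]
    rw [show (6 : ℝ≥0∞) = 2 * 3 by norm_num, mul_assoc,
      ENNReal.mul_inv_cancel (by norm_num) (by norm_num), mul_one]
  -- assemble
  calc (‖(4/3 : ℝ)‖₊ : ℝ≥0∞) * eLpNorm (fun x => G x * F x) (ENNReal.ofReal (3/2)) volume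
      ≤ 2 * (eLpNorm G 6 volume * eLpNorm F 2 volume) := by
        apply mul_le_mul' ?_ hHolder
        rw [← enorm_eq_nnnorm, ← ofReal_norm, Real.norm_eq_abs, abs_of_nonneg (by norm_num)]
        calc ENNReal.ofReal (4/3) ≤ ENNReal.ofReal 2 := ENNReal.ofReal_le_ofReal (by norm_num)
          _ = 2 := by simp
    _ = (2 : ℝ≥0) * eLpNorm F 2 volume * (eLpNorm a34 2 volume) ^ ((1:ℝ)/3) := by
        rw [hG6]; push_cast; ring
end
end

section
/- Let (s, α) ∈ (0,1)² and (p, q) ∈ [1,∞]². Let G : ℝ → ℝ be Hölder continuous of exponent α with constant ‖G‖_{C^α} = sup_{r≠r'} |G(r)−G(r')|/|r−r'|^α, and G(0) = 0. Then for any a in the homogeneous Besov space B^s_{p,q}(ℝ^d), the composition G(a) belongs to B^{αs}_{p/α, q/α} and ‖G(a)‖_{B^{αs}_{p/α, q/α}} ≤ C ‖G‖_{C^α} ‖a‖_{B^s_{p,q}}^α. -/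
open MeasureTheory ENNReal
open scoped NNReal

noncomputable section

/-- Homogeneous Besov norm `B^σ_{r,m}(ℝ^d)` (for `0 < σ < 1`) characterized by finite
differences: `( ∫ (‖f − f(·+y)‖_{L^r} / |y|^σ)^m dy/|y|^d )^{1/m}`, with the essential
supremum modification when `m = ∞`. -/
def besovDiff (d : ℕ) (σ : ℝ) (r m : ℝ≥0∞) (f : EuclideanSpace ℝ (Fin d) → ℝ) : ℝ≥0∞ :=
  if m = ∞ then
    essSup (fun y : EuclideanSpace ℝ (Fin d) =>
      eLpNorm (fun x => f x - f (x + y)) r volume / ENNReal.ofReal (‖y‖ ^ σ)) volume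
  else
    (∫⁻ y : EuclideanSpace ℝ (Fin d),
        (eLpNorm (fun x => f x - f (x + y)) r volume / ENNReal.ofReal (‖y‖ ^ σ)) ^ m.toReal
          / ENNReal.ofReal (‖y‖ ^ (d:ℝ))) ^ (1 / m.toReal)

/-- Hölder continuous functions of exponent `α` (with `G(0)=0`) act on homogeneous Besov
spaces: for `(s,α) ∈ (0,1)²` and `(p,q) ∈ [1,∞]²`,
`‖G(a)‖_{B^{αs}_{p/α, q/α}} ≤ C ‖G‖_{C^α} ‖a‖_{B^s_{p,q}}^α`. -/
theorem stmt7 (d : ℕ) (hd : 0 < d) (s α : ℝ) (hs : 0 < s) (hs1 : s < 1)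
    (hα : 0 < α) (hα1 : α < 1) (p q : ℝ≥0∞) (hp : 1 ≤ p) (hq : 1 ≤ q) :
    ∃ C : ℝ≥0, 0 < C ∧ ∀ (K : ℝ≥0) (G : ℝ → ℝ),
      (∀ r r' : ℝ, |G r - G r'| ≤ K * |r - r'| ^ α) → G 0 = 0 →
      ∀ f : EuclideanSpace ℝ (Fin d) → ℝ,
        besovDiff d (α * s) (p / ENNReal.ofReal α) (q / ENNReal.ofReal α)
            (fun x => G (f x))
          ≤ C * K * (besovDiff d s p q f) ^ α := by
  refine ⟨1, one_pos, fun K G hG hG0 f => ?_⟩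
  have hα0 : ENNReal.ofReal α ≠ 0 := by simp [hα, hα.not_ge]
  have hαt : ENNReal.ofReal α ≠ ∞ := ENNReal.ofReal_ne_top
  set E : EuclideanSpace ℝ (Fin d) → ℝ≥0∞ :=
    fun y => eLpNorm (fun x => f x - f (x + y)) p volume with hE
  set E' : EuclideanSpace ℝ (Fin d) → ℝ≥0∞ :=
    fun y => eLpNorm (fun x => G (f x) - G (f (x + y))) (p / ENNReal.ofReal α) volume with hE'
  have key : ∀ y, E' y ≤ (K : ℝ≥0∞) * E y ^ α := by
    intro y
    have hmono : ∀ x, ‖G (f x) - G (f (x + y))‖ ≤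
        ‖((K : ℝ) • fun x => ‖f x - f (x + y)‖ ^ α) x‖ := by
      intro x
      simp only [Pi.smul_apply, smul_eq_mul, Real.norm_eq_abs]
      exact (hG _ _).trans (le_abs_self _)
    calc E' y
        ≤ eLpNorm ((K : ℝ) • fun x => ‖f x - f (x + y)‖ ^ α) (p / ENNReal.ofReal α) volume :=
          eLpNorm_mono hmono
      _ = (‖(K : ℝ)‖₊ : ℝ≥0∞) * eLpNorm (fun x => ‖f x - f (x + y)‖ ^ α)
            (p / ENNReal.ofReal α) volume := by
          rw [eLpNorm_const_smul, enorm_eq_nnnorm]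
      _ = (K : ℝ≥0∞) * eLpNorm (fun x => f x - f (x + y))
            (p / ENNReal.ofReal α * ENNReal.ofReal α) volume ^ α := by
          rw [eLpNorm_norm_rpow _ hα]
          congr 1
          simp
      _ = (K : ℝ≥0∞) * E y ^ α := by
          rw [ENNReal.div_mul_cancel hα0 hαt]
  have keyq : ∀ y : EuclideanSpace ℝ (Fin d),
      E' y / ENNReal.ofReal (‖y‖ ^ (α * s))
        ≤ (K : ℝ≥0∞) * (E y / ENNReal.ofReal (‖y‖ ^ s)) ^ α := by
    intro y
    have hD : ENNReal.ofReal (‖y‖ ^ (α * s)) = ENNReal.ofReal (‖y‖ ^ s) ^ α := by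
      rw [ENNReal.ofReal_rpow_of_nonneg (Real.rpow_nonneg (norm_nonneg _) _) hα.le,
        ← Real.rpow_mul (norm_nonneg _), mul_comm s α]
    rw [hD, ENNReal.div_rpow_of_nonneg _ _ hα.le, ← mul_div_assoc]
    exact ENNReal.div_le_div_right (key y) _
  rcases eq_or_ne q ∞ with hqt | hqt
  · -- q = ∞
    have hm : q / ENNReal.ofReal α = ∞ := by
      rw [hqt]
      simp [ENNReal.div_eq_top, hα0, hαt]
    rw [besovDiff, besovDiff, hm, hqt, if_pos rfl, if_pos rfl]
    calc essSup (fun y : EuclideanSpace ℝ (Fin d) =>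
            E' y / ENNReal.ofReal (‖y‖ ^ (α * s))) volume
        ≤ essSup (fun y : EuclideanSpace ℝ (Fin d) =>
            (K : ℝ≥0∞) * (E y / ENNReal.ofReal (‖y‖ ^ s)) ^ α) volume :=
          essSup_mono_ae (Filter.Eventually.of_forall keyq)
      _ = (K : ℝ≥0∞) * essSup (fun y : EuclideanSpace ℝ (Fin d) =>
            (E y / ENNReal.ofReal (‖y‖ ^ s)) ^ α) volume := essSup_const_mul
      _ = (K : ℝ≥0∞) * (essSup (fun y : EuclideanSpace ℝ (Fin d) =>
            E y / ENNReal.ofReal (‖y‖ ^ s)) volume) ^ α := by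
          have h := (ENNReal.orderIsoRpow α hα).essSup_apply
            (fun y : EuclideanSpace ℝ (Fin d) => E y / ENNReal.ofReal (‖y‖ ^ s)) volume
          simp only [ENNReal.orderIsoRpow_apply] at h
          exact congrArg (fun z => (K : ℝ≥0∞) * z) h.symm
      _ = 1 * (K : ℝ≥0∞) * (essSup (fun y : EuclideanSpace ℝ (Fin d) =>
            E y / ENNReal.ofReal (‖y‖ ^ s)) volume) ^ α := by rw [one_mul]
      _ = _ := by norm_num [hE]
  · -- q < ∞
    have hm : q / ENNReal.ofReal α ≠ ∞ := by
      simp [ENNReal.div_eq_top, hα0, hqt]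
    have hq1 : (1 : ℝ) ≤ q.toReal := by
      rw [← ENNReal.toReal_one]
      exact ENNReal.toReal_mono hqt hq
    have hqtr : 0 < q.toReal := lt_of_lt_of_le one_pos hq1
    have hmtr : (q / ENNReal.ofReal α).toReal = q.toReal / α := by
      rw [ENNReal.toReal_div, ENNReal.toReal_ofReal hα.le]
    have hmtr0 : 0 < (q / ENNReal.ofReal α).toReal := by
      rw [hmtr]; positivity
    rw [besovDiff, besovDiff, if_neg hm, if_neg hqt]
    set mtr := (q / ENNReal.ofReal α).toReal
    have hαm : α * mtr = q.toReal := by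
      rw [hmtr]; field_simp
    calc (∫⁻ y : EuclideanSpace ℝ (Fin d),
            (E' y / ENNReal.ofReal (‖y‖ ^ (α * s))) ^ mtr
              / ENNReal.ofReal (‖y‖ ^ (d : ℝ))) ^ (1 / mtr)
        ≤ (∫⁻ y : EuclideanSpace ℝ (Fin d),
            (K : ℝ≥0∞) ^ mtr * ((E y / ENNReal.ofReal (‖y‖ ^ s)) ^ q.toReal
              / ENNReal.ofReal (‖y‖ ^ (d : ℝ)))) ^ (1 / mtr) := by
          refine ENNReal.rpow_le_rpow (lintegral_mono fun y => ?_) (by positivity)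
          rw [← mul_div_assoc]
          refine ENNReal.div_le_div_right ?_ _
          calc (E' y / ENNReal.ofReal (‖y‖ ^ (α * s))) ^ mtr
              ≤ ((K : ℝ≥0∞) * (E y / ENNReal.ofReal (‖y‖ ^ s)) ^ α) ^ mtr :=
                ENNReal.rpow_le_rpow (keyq y) hmtr0.le
            _ = (K : ℝ≥0∞) ^ mtr * ((E y / ENNReal.ofReal (‖y‖ ^ s)) ^ α) ^ mtr :=
                ENNReal.mul_rpow_of_nonneg _ _ hmtr0.le
            _ = (K : ℝ≥0∞) ^ mtr * (E y / ENNReal.ofReal (‖y‖ ^ s)) ^ q.toReal := by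
                rw [← ENNReal.rpow_mul, hαm]
      _ = ((K : ℝ≥0∞) ^ mtr * ∫⁻ y : EuclideanSpace ℝ (Fin d),
            (E y / ENNReal.ofReal (‖y‖ ^ s)) ^ q.toReal
              / ENNReal.ofReal (‖y‖ ^ (d : ℝ))) ^ (1 / mtr) := by
          rw [lintegral_const_mul' _ _ (by simp [ENNReal.rpow_eq_top_iff, hmtr0, hmtr0.not_gt, hmtr0.le])]
      _ = (K : ℝ≥0∞) * ((∫⁻ y : EuclideanSpace ℝ (Fin d),
            (E y / ENNReal.ofReal (‖y‖ ^ s)) ^ q.toReal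
              / ENNReal.ofReal (‖y‖ ^ (d : ℝ))) ^ (1 / q.toReal)) ^ α := by
          rw [ENNReal.mul_rpow_of_nonneg _ _ (by positivity), ← ENNReal.rpow_mul,
            ← ENNReal.rpow_mul, mul_one_div, div_self hmtr0.ne', ENNReal.rpow_one]
          congr 1
          rw [hmtr, one_div_div, one_div_mul_eq_div]
      _ = 1 * (K : ℝ≥0∞) * ((∫⁻ y : EuclideanSpace ℝ (Fin d),
            (E y / ENNReal.ofReal (‖y‖ ^ s)) ^ q.toReal
              / ENNReal.ofReal (‖y‖ ^ (d : ℝ))) ^ (1 / q.toReal)) ^ α := by rw [one_mul]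
      _ = _ := by norm_num [hE]
end
end

section
/- Let (α, θ) ∈ (0, 1/2)². For any tempered distribution a on ℝ³ with a ∈ H_θ and ∇a ∈ H_θ (componentwise), one has ‖a‖_{(B⁰_{2,1})_h (B^{1/2−α}_{2,1})_v} ≤ C ‖a‖_{H_θ}^{α} ‖∇a‖_{H_θ}^{1−α}. -/
open MeasureTheory ENNReal
open scoped NNReal

noncomputable section

/-- The `L²` norm of the anisotropic Littlewood–Paley block `Δ^h_k Δ^v_ℓ a`, computed on the
Fourier side (by Plancherel) with dyadic cutoff profile `φ` and `A = â`. -/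
def blockL2 (φ : ℝ → ℝ) (k ℓ : ℤ) (A : (Fin 3 → ℝ) → ℂ) : ℝ≥0∞ :=
  (∫⁻ ξ, ENNReal.ofReal ((φ ((2:ℝ) ^ (-k) * hmod ξ)) ^ 2 * (φ ((2:ℝ) ^ (-ℓ) * |ξ 2|)) ^ 2)
      * (‖A ξ‖₊ : ℝ≥0∞) ^ 2) ^ ((1:ℝ)/2)

namespace Stmt10Aux


/-- dyadic scale as an extended nonneg real -/
def E (t : ℝ) : ℝ≥0∞ := ENNReal.ofReal ((2:ℝ) ^ t)

lemma E_ne_top (t : ℝ) : E t ≠ ⊤ := ENNReal.ofReal_ne_top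

lemma E_ne_zero (t : ℝ) : E t ≠ 0 := by
  simp [E, ENNReal.ofReal_eq_zero, not_le, Real.rpow_pos_of_pos two_pos]

lemma E_add (s t : ℝ) : E (s + t) = E s * E t := by
  unfold E
  rw [Real.rpow_add two_pos, ENNReal.ofReal_mul (Real.rpow_nonneg (by norm_num) _)]

lemma E_mono {s t : ℝ} (h : s ≤ t) : E s ≤ E t :=
  ENNReal.ofReal_le_ofReal (Real.rpow_le_rpow_of_exponent_le one_le_two h)

lemma E_rpow (t c : ℝ) : (E t) ^ c = E (t * c) := by
  unfold E
  rw [ENNReal.ofReal_rpow_of_pos (Real.rpow_pos_of_pos two_pos _), ← Real.rpow_mul (by norm_num)]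

lemma E_lt_one {c : ℝ} (hc : 0 < c) : E (-c) < 1 :=
  ENNReal.ofReal_lt_one.mpr (Real.rpow_lt_one_of_one_lt_of_neg one_lt_two (by linarith))

lemma geom (c : ℝ) : (∑' j : ℕ, E (-((j:ℝ) * c))) = (1 - E (-c))⁻¹ := by
  have h : ∀ j : ℕ, E (-((j:ℝ) * c)) = (E (-c)) ^ j := by
    intro j
    unfold E
    rw [← ENNReal.ofReal_pow (Real.rpow_nonneg (by norm_num) _),
      ← Real.rpow_natCast ((2:ℝ) ^ (-c)) j, ← Real.rpow_mul (by norm_num)]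
    congr 1
    ring
  rw [tsum_congr h, ENNReal.tsum_geometric]

lemma geom_ne_top {c : ℝ} (hc : 0 < c) : (1 - E (-c))⁻¹ ≠ ⊤ := by
  rw [ENNReal.inv_ne_top]
  exact (tsub_pos_of_lt (E_lt_one hc)).ne'

lemma sumZ {c : ℝ} (hc : 0 < c) (n₀ : ℤ) :
    (∑' n : ℤ, E (-(|(n:ℝ) - (n₀:ℝ)| * c))) ≤ 2 * (1 - E (-c))⁻¹ := by
  have h1 : (∑' n : ℤ, E (-(|(n:ℝ) - (n₀:ℝ)| * c)))
      = ∑' d : ℤ, E (-(|(d:ℝ)| * c)) := by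
    calc (∑' n : ℤ, E (-(|(n:ℝ) - (n₀:ℝ)| * c)))
        = ∑' n : ℤ, (fun d : ℤ => E (-(|(d:ℝ)| * c))) ((Equiv.subRight n₀) n) := by
          refine tsum_congr fun n => ?_
          simp only [Equiv.subRight_apply]
          push_cast
          ring_nf
      _ = ∑' d : ℤ, E (-(|(d:ℝ)| * c)) := (Equiv.subRight n₀).tsum_eq fun d : ℤ => E (-(|(d:ℝ)| * c))
  rw [h1, tsum_of_nat_of_neg_add_one ENNReal.summable ENNReal.summable]
  have hA : (∑' j : ℕ, E (-(|((j:ℤ):ℝ)| * c))) = (1 - E (-c))⁻¹ := by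
    rw [← geom c]
    refine tsum_congr fun j => ?_
    congr 2
    push_cast
    rw [abs_of_nonneg (by positivity)]
  have hB : (∑' j : ℕ, E (-(|((-((j:ℤ)+1) : ℤ) : ℝ)| * c))) ≤ (1 - E (-c))⁻¹ := by
    rw [← geom c]
    refine ENNReal.tsum_le_tsum fun j => ?_
    refine E_mono ?_
    have : |((-((j:ℤ)+1) : ℤ) : ℝ)| = (j:ℝ) + 1 := by
      push_cast
      rw [abs_neg, abs_of_nonneg (by positivity)]
    rw [this]
    nlinarith [hc, Nat.cast_nonneg (α := ℝ) j]
  rw [two_mul]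
  exact add_le_add hA.le hB


lemma mul_min' (c u v : ℝ≥0∞) : c * min u v = min (c * u) (c * v) := by
  rcases le_total u v with h | h
  · rw [min_eq_left h, min_eq_left (mul_le_mul_right h c)]
  · rw [min_eq_right h, min_eq_right (mul_le_mul_right h c)]

lemma sum_min {a b : ℝ} (ha : 0 < a) (hb : 0 < b) (hab : a + b = 1) {P Q : ℝ≥0∞}
    (hP0 : P ≠ 0) (hPt : P ≠ ⊤) (hQ0 : Q ≠ 0) (hQt : Q ≠ ⊤) :
    (∑' n : ℤ, min (E ((n:ℝ) * a) * P) (E (-(n:ℝ) * b) * Q))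
      ≤ 4 * (1 - E (-(min a b)))⁻¹ * (P ^ b * Q ^ a) := by
  set p := P.toReal with hp'
  set q := Q.toReal with hq'
  have hp : 0 < p := ENNReal.toReal_pos hP0 hPt
  have hq : 0 < q := ENNReal.toReal_pos hQ0 hQt
  have hPp : P = ENNReal.ofReal p := (ENNReal.ofReal_toReal hPt).symm
  have hQq : Q = ENNReal.ofReal q := (ENNReal.ofReal_toReal hQt).symm
  set r := Real.logb 2 (q / p) with hr'
  set k₀ : ℤ := ⌈r⌉ with hk₀'
  have h2r : (2:ℝ) ^ r = q / p :=
    Real.rpow_logb (by norm_num) (by norm_num) (by positivity)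
  have ha1 : a ≤ 1 := by linarith
  -- the balanced quantity
  set D : ℝ≥0∞ := P ^ b * Q ^ a with hD'
  have hDr : D = ENNReal.ofReal (p ^ b * q ^ a) := by
    rw [hD', hPp, hQq, ENNReal.ofReal_rpow_of_pos hp, ENNReal.ofReal_rpow_of_pos hq,
      ENNReal.ofReal_mul (Real.rpow_nonneg hp.le _)]
  have key1 : E ((k₀:ℝ) * a) * P ≤ 2 * D := by
    have hceil : (k₀:ℝ) ≤ r + 1 := le_of_lt (Int.ceil_lt_add_one r)
    have real1 : (2:ℝ) ^ ((k₀:ℝ) * a) * p ≤ 2 * (p ^ b * q ^ a) := by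
      have s1 : (2:ℝ) ^ ((k₀:ℝ) * a) ≤ (2:ℝ) ^ ((r + 1) * a) :=
        Real.rpow_le_rpow_of_exponent_le one_le_two
          (mul_le_mul_of_nonneg_right hceil ha.le)
      have s2 : (2:ℝ) ^ ((r + 1) * a) = ((q / p) * 2) ^ a := by
        rw [Real.rpow_mul (by norm_num), Real.rpow_add two_pos, h2r, Real.rpow_one]
      have s3 : ((q / p) * 2) ^ a = (q / p) ^ a * (2:ℝ) ^ a :=
        Real.mul_rpow (by positivity) (by norm_num)
      have s4 : (2:ℝ) ^ a ≤ 2 := by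
        calc (2:ℝ) ^ a ≤ (2:ℝ) ^ (1:ℝ) := Real.rpow_le_rpow_of_exponent_le one_le_two ha1
          _ = 2 := Real.rpow_one 2
      have s5 : (q / p) ^ a * p = p ^ b * q ^ a := by
        have hpb : p ^ b = p ^ (1:ℝ) / p ^ a := by
          rw [← Real.rpow_sub hp]; congr 1; linarith
        rw [Real.div_rpow hq.le hp.le, hpb, Real.rpow_one]
        field_simp
      calc (2:ℝ) ^ ((k₀:ℝ) * a) * p ≤ (2:ℝ) ^ ((r + 1) * a) * p :=
            mul_le_mul_of_nonneg_right s1 hp.le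
        _ = (q / p) ^ a * (2:ℝ) ^ a * p := by rw [s2, s3]
        _ ≤ (q / p) ^ a * 2 * p := by
            have : (q / p) ^ a * (2:ℝ) ^ a ≤ (q / p) ^ a * 2 :=
              mul_le_mul_of_nonneg_left s4 (by positivity)
            exact mul_le_mul_of_nonneg_right this hp.le
        _ = 2 * ((q / p) ^ a * p) := by ring
        _ = 2 * (p ^ b * q ^ a) := by rw [s5]
    calc E ((k₀:ℝ) * a) * P = ENNReal.ofReal ((2:ℝ) ^ ((k₀:ℝ) * a) * p) := by
          rw [hPp, E, ← ENNReal.ofReal_mul (Real.rpow_nonneg (by norm_num) _)]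
      _ ≤ ENNReal.ofReal (2 * (p ^ b * q ^ a)) := ENNReal.ofReal_le_ofReal real1
      _ = 2 * D := by
          rw [hDr, ENNReal.ofReal_mul (by norm_num), ENNReal.ofReal_ofNat]
  have key2 : E (-(k₀:ℝ) * b) * Q ≤ D := by
    have hceil : r ≤ (k₀:ℝ) := Int.le_ceil r
    have real2 : (2:ℝ) ^ (-(k₀:ℝ) * b) * q ≤ p ^ b * q ^ a := by
      have s1 : (2:ℝ) ^ (-(k₀:ℝ) * b) ≤ (2:ℝ) ^ (-r * b) :=
        Real.rpow_le_rpow_of_exponent_le one_le_two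
          (by nlinarith)
      have s2 : (2:ℝ) ^ (-r * b) = (q / p) ^ (-b) := by
        rw [show -r * b = r * (-b) by ring, Real.rpow_mul (by norm_num), h2r]
      have s3 : (q / p) ^ (-b) = (p / q) ^ b := by
        rw [show p / q = (q / p)⁻¹ by rw [inv_div],
          Real.inv_rpow (by positivity : (0:ℝ) ≤ q / p),
          ← Real.rpow_neg (by positivity : (0:ℝ) ≤ q / p)]
      have s4 : (p / q) ^ b * q = p ^ b * q ^ a := by
        have hqa : q ^ a = q ^ (1:ℝ) / q ^ b := by
          rw [← Real.rpow_sub hq]; congr 1; linarith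
        rw [Real.div_rpow hp.le hq.le, hqa, Real.rpow_one]
        field_simp
      calc (2:ℝ) ^ (-(k₀:ℝ) * b) * q ≤ (2:ℝ) ^ (-r * b) * q :=
            mul_le_mul_of_nonneg_right s1 hq.le
        _ = (p / q) ^ b * q := by rw [s2, s3]
        _ = p ^ b * q ^ a := s4
    calc E (-(k₀:ℝ) * b) * Q = ENNReal.ofReal ((2:ℝ) ^ (-(k₀:ℝ) * b) * q) := by
          rw [hQq, E, ← ENNReal.ofReal_mul (Real.rpow_nonneg (by norm_num) _)]
      _ ≤ ENNReal.ofReal (p ^ b * q ^ a) := ENNReal.ofReal_le_ofReal real2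
      _ = D := hDr.symm
  set m₀ := min a b with hm₀'
  have hm₀ : 0 < m₀ := lt_min ha hb
  have pointwise : ∀ n : ℤ, min (E ((n:ℝ) * a) * P) (E (-(n:ℝ) * b) * Q)
      ≤ E (-(|(n:ℝ) - (k₀:ℝ)| * m₀)) * (2 * D) := by
    intro n
    rcases le_total (n:ℝ) (k₀:ℝ) with h | h
    · -- use the first component
      have habs : |(n:ℝ) - (k₀:ℝ)| = (k₀:ℝ) - n := by
        rw [abs_of_nonpos (by linarith)]; ring
      have e1 : (n:ℝ) * a = (((n:ℝ) - k₀) * a) + (k₀:ℝ) * a := by ring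
      calc min (E ((n:ℝ) * a) * P) (E (-(n:ℝ) * b) * Q) ≤ E ((n:ℝ) * a) * P :=
            min_le_left _ _
        _ = E (((n:ℝ) - k₀) * a) * (E ((k₀:ℝ) * a) * P) := by
            rw [e1, E_add, mul_assoc]
        _ ≤ E (((n:ℝ) - k₀) * a) * (2 * D) := mul_le_mul_right key1 _
        _ ≤ E (-(|(n:ℝ) - (k₀:ℝ)| * m₀)) * (2 * D) := by
            refine mul_le_mul_left (E_mono ?_) _
            rw [habs]
            have hma : m₀ ≤ a := min_le_left a b
            nlinarith
    · have habs : |(n:ℝ) - (k₀:ℝ)| = (n:ℝ) - k₀ := abs_of_nonneg (by linarith)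
      have e1 : -(n:ℝ) * b = (-(((n:ℝ) - k₀)) * b) + (-(k₀:ℝ) * b) := by ring
      calc min (E ((n:ℝ) * a) * P) (E (-(n:ℝ) * b) * Q) ≤ E (-(n:ℝ) * b) * Q :=
            min_le_right _ _
        _ = E (-(((n:ℝ) - k₀)) * b) * (E (-(k₀:ℝ) * b) * Q) := by
            rw [e1, E_add, mul_assoc]
        _ ≤ E (-(((n:ℝ) - k₀)) * b) * (2 * D) := by
            refine mul_le_mul_right (key2.trans ?_) _
            calc D = 1 * D := (one_mul D).symm
              _ ≤ 2 * D := mul_le_mul_left (by norm_num) _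
        _ ≤ E (-(|(n:ℝ) - (k₀:ℝ)| * m₀)) * (2 * D) := by
            refine mul_le_mul_left (E_mono ?_) _
            rw [habs]
            have hmb : m₀ ≤ b := min_le_right a b
            nlinarith
  calc (∑' n : ℤ, min (E ((n:ℝ) * a) * P) (E (-(n:ℝ) * b) * Q))
      ≤ ∑' n : ℤ, E (-(|(n:ℝ) - (k₀:ℝ)| * m₀)) * (2 * D) :=
        ENNReal.tsum_le_tsum pointwise
    _ = (∑' n : ℤ, E (-(|(n:ℝ) - (k₀:ℝ)| * m₀))) * (2 * D) := ENNReal.tsum_mul_right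
    _ ≤ (2 * (1 - E (-m₀))⁻¹) * (2 * D) := mul_le_mul_left (sumZ hm₀ k₀) _
    _ = 4 * (1 - E (-(min a b)))⁻¹ * (P ^ b * Q ^ a) := by
        rw [hm₀', hD']; ring


lemma support_bounds (φ : ℝ → ℝ)
    (hφsupp : ∀ τ : ℝ, (|τ| < 3/4 ∨ 8/3 < |τ|) → φ τ = 0)
    (n : ℤ) (x : ℝ) (hx : 0 ≤ x) (h : φ ((2:ℝ) ^ (-n) * x) ≠ 0) :
    (3/4) * (2:ℝ) ^ ((n:ℝ)) ≤ x ∧ x ≤ (8/3) * (2:ℝ) ^ ((n:ℝ)) := by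
  have h2 : ¬ (|(2:ℝ) ^ (-n) * x| < 3/4 ∨ 8/3 < |(2:ℝ) ^ (-n) * x|) :=
    fun hc => h (hφsupp _ hc)
  push_neg at h2
  obtain ⟨h3, h4⟩ := h2
  have hzp : (0:ℝ) < (2:ℝ) ^ (-n : ℤ) := by positivity
  rw [abs_of_nonneg (by positivity)] at h3 h4
  have hp : (0:ℝ) < (2:ℝ) ^ ((n:ℝ)) := Real.rpow_pos_of_pos two_pos _
  have hE : (2:ℝ) ^ (-n : ℤ) = ((2:ℝ) ^ ((n:ℝ)))⁻¹ := by
    rw [← Real.rpow_intCast (2:ℝ) (-n)]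
    push_cast
    rw [Real.rpow_neg (by norm_num)]
  rw [hE] at h3 h4
  constructor
  · have := mul_le_mul_of_nonneg_right h3 hp.le
    calc (3/4) * (2:ℝ) ^ ((n:ℝ)) ≤ ((2:ℝ) ^ ((n:ℝ)))⁻¹ * x * (2:ℝ) ^ ((n:ℝ)) := this
      _ = x := by field_simp
  · have := mul_le_mul_of_nonneg_right h4 hp.le
    calc x = ((2:ℝ) ^ ((n:ℝ)))⁻¹ * x * (2:ℝ) ^ ((n:ℝ)) := by field_simp
      _ ≤ (8/3) * (2:ℝ) ^ ((n:ℝ)) := this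

lemma rpow_lb {x : ℝ} {n : ℤ} {e : ℝ}
    (h1 : (3/4) * (2:ℝ) ^ ((n:ℝ)) ≤ x) (h2 : x ≤ (8/3) * (2:ℝ) ^ ((n:ℝ)))
    (he1 : -1 ≤ e) (he2 : e ≤ 0) :
    (3/8) * (2:ℝ) ^ ((n:ℝ) * e) ≤ x ^ e := by
  have hp : (0:ℝ) < (2:ℝ) ^ ((n:ℝ)) := Real.rpow_pos_of_pos two_pos _
  have hx : 0 < x := lt_of_lt_of_le (by positivity) h1
  have step1 : ((8/3) * (2:ℝ) ^ ((n:ℝ))) ^ e ≤ x ^ e :=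
    Real.rpow_le_rpow_of_nonpos hx h2 he2
  have step2 : ((8/3) * (2:ℝ) ^ ((n:ℝ))) ^ e = (8/3:ℝ) ^ e * (2:ℝ) ^ ((n:ℝ) * e) := by
    rw [Real.mul_rpow (by norm_num) hp.le, Real.rpow_mul (by norm_num)]
  have step3 : (3/8:ℝ) ≤ (8/3:ℝ) ^ e := by
    have := Real.rpow_le_rpow_of_exponent_le (by norm_num : (1:ℝ) ≤ 8/3) he1
    rw [Real.rpow_neg_one] at this
    calc (3/8:ℝ) = (8/3:ℝ)⁻¹ := by norm_num
      _ ≤ (8/3:ℝ) ^ e := this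
  calc (3/8) * (2:ℝ) ^ ((n:ℝ) * e) ≤ (8/3:ℝ) ^ e * (2:ℝ) ^ ((n:ℝ) * e) :=
        mul_le_mul_of_nonneg_right step3 (Real.rpow_nonneg (by norm_num) _)
    _ = ((8/3) * (2:ℝ) ^ ((n:ℝ))) ^ e := step2.symm
    _ ≤ x ^ e := step1

lemma pow_half_16 : (ENNReal.ofReal 16) ^ ((1:ℝ)/2) = ENNReal.ofReal 4 := by
  rw [ENNReal.ofReal_rpow_of_pos (by norm_num)]
  congr 1
  rw [show (16:ℝ) = (4:ℝ) ^ (2:ℕ) by norm_num, ← Real.rpow_natCast (4:ℝ) 2,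
    ← Real.rpow_mul (by norm_num)]
  norm_num

theorem block_bound1 (θ : ℝ) (hθ0 : 0 < θ) (hθ : θ < 1/2)
    (φ : ℝ → ℝ) (hφsupp : ∀ τ : ℝ, (|τ| < 3/4 ∨ 8/3 < |τ|) → φ τ = 0)
    (hφbd : ∀ τ : ℝ, |φ τ| ≤ 1) (k ℓ : ℤ) (A : (Fin 3 → ℝ) → ℂ) :
    blockL2 φ k ℓ A ≤ ENNReal.ofReal 4 * E ((k:ℝ) * (1/2 - θ) + (ℓ:ℝ) * θ) *
      (∫⁻ ξ, ENNReal.ofReal (hmod ξ ^ (-1 + 2*θ) * |ξ 2| ^ (-(2*θ)))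
        * (‖A ξ‖₊ : ℝ≥0∞) ^ 2) ^ ((1:ℝ)/2) := by
  set s : ℝ := (k:ℝ) * (1/2 - θ) + (ℓ:ℝ) * θ with hs
  have key : ∀ ξ : Fin 3 → ℝ,
      ENNReal.ofReal ((φ ((2:ℝ) ^ (-k) * hmod ξ)) ^ 2 * (φ ((2:ℝ) ^ (-ℓ) * |ξ 2|)) ^ 2)
        * (‖A ξ‖₊ : ℝ≥0∞) ^ 2
      ≤ (ENNReal.ofReal 16 * E (2 * s)) *
        (ENNReal.ofReal (hmod ξ ^ (-1 + 2*θ) * |ξ 2| ^ (-(2*θ))) * (‖A ξ‖₊ : ℝ≥0∞) ^ 2) := by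
    intro ξ
    rcases eq_or_ne (φ ((2:ℝ) ^ (-k) * hmod ξ)) 0 with h1 | h1
    · rw [h1]; simp
    rcases eq_or_ne (φ ((2:ℝ) ^ (-ℓ) * |ξ 2|)) 0 with h2 | h2
    · rw [h2]; simp
    obtain ⟨ha1, ha2⟩ := support_bounds φ hφsupp k _ (Real.sqrt_nonneg _) h1
    obtain ⟨hb1, hb2⟩ := support_bounds φ hφsupp ℓ _ (abs_nonneg _) h2
    rw [show (ENNReal.ofReal 16 * E (2 * s)) *
        (ENNReal.ofReal (hmod ξ ^ (-1 + 2*θ) * |ξ 2| ^ (-(2*θ))) * (‖A ξ‖₊ : ℝ≥0∞) ^ 2)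
      = (ENNReal.ofReal 16 * E (2 * s) * ENNReal.ofReal (hmod ξ ^ (-1 + 2*θ) * |ξ 2| ^ (-(2*θ))))
        * (‖A ξ‖₊ : ℝ≥0∞) ^ 2 from by ring]
    refine mul_le_mul_left ?_ _
    rw [E, ← ENNReal.ofReal_mul (by norm_num), ← ENNReal.ofReal_mul (by positivity)]
    refine ENNReal.ofReal_le_ofReal ?_
    -- real inequality
    have hφ1 : (φ ((2:ℝ) ^ (-k) * hmod ξ)) ^ 2 ≤ 1 := by
      have h := hφbd ((2:ℝ) ^ (-k) * hmod ξ)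
      have h' := abs_nonneg (φ ((2:ℝ) ^ (-k) * hmod ξ))
      nlinarith [sq_abs (φ ((2:ℝ) ^ (-k) * hmod ξ))]
    have hφ2 : (φ ((2:ℝ) ^ (-ℓ) * |ξ 2|)) ^ 2 ≤ 1 := by
      have h := hφbd ((2:ℝ) ^ (-ℓ) * |ξ 2|)
      have h' := abs_nonneg (φ ((2:ℝ) ^ (-ℓ) * |ξ 2|))
      nlinarith [sq_abs (φ ((2:ℝ) ^ (-ℓ) * |ξ 2|))]
    have hw1 : (3/8) * (2:ℝ) ^ ((k:ℝ) * (-1 + 2*θ)) ≤ hmod ξ ^ (-1 + 2*θ) :=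
      rpow_lb ha1 ha2 (by linarith) (by linarith)
    have hw2 : (3/8) * (2:ℝ) ^ ((ℓ:ℝ) * (-(2*θ))) ≤ |ξ 2| ^ (-(2*θ)) :=
      rpow_lb hb1 hb2 (by linarith) (by linarith)
    have hprod : (9/64) * ((2:ℝ) ^ ((k:ℝ) * (-1 + 2*θ)) * (2:ℝ) ^ ((ℓ:ℝ) * (-(2*θ))))
        ≤ hmod ξ ^ (-1 + 2*θ) * |ξ 2| ^ (-(2*θ)) := by
      have := mul_le_mul hw1 hw2 (by positivity) (le_trans (by positivity) hw1)
      calc (9/64) * ((2:ℝ) ^ ((k:ℝ) * (-1 + 2*θ)) * (2:ℝ) ^ ((ℓ:ℝ) * (-(2*θ))))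
          = (3/8) * (2:ℝ) ^ ((k:ℝ) * (-1 + 2*θ)) * ((3/8) * (2:ℝ) ^ ((ℓ:ℝ) * (-(2*θ)))) := by
            ring
        _ ≤ _ := this
    have hone : (2:ℝ) ^ (2 * s) * ((2:ℝ) ^ ((k:ℝ) * (-1 + 2*θ)) * (2:ℝ) ^ ((ℓ:ℝ) * (-(2*θ)))) = 1 := by
      rw [← Real.rpow_add two_pos, ← Real.rpow_add two_pos]
      rw [show 2 * s + ((k:ℝ) * (-1 + 2*θ) + (ℓ:ℝ) * (-(2*θ))) = 0 from by rw [hs]; ring]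
      exact Real.rpow_zero 2
    have h2s : (0:ℝ) < (2:ℝ) ^ (2 * s) := Real.rpow_pos_of_pos two_pos _
    nlinarith [mul_le_mul_of_nonneg_left hprod (by positivity : (0:ℝ) ≤ 16 * (2:ℝ) ^ (2*s)),
      mul_pos (Real.rpow_pos_of_pos two_pos ((k:ℝ) * (-1 + 2*θ)))
        (Real.rpow_pos_of_pos two_pos ((ℓ:ℝ) * (-(2*θ)))),
      mul_nonneg (sq_nonneg (φ ((2:ℝ) ^ (-k) * hmod ξ))) (sq_nonneg (φ ((2:ℝ) ^ (-ℓ) * |ξ 2|)))]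
  calc blockL2 φ k ℓ A
      ≤ ((ENNReal.ofReal 16 * E (2 * s)) *
          ∫⁻ ξ, ENNReal.ofReal (hmod ξ ^ (-1 + 2*θ) * |ξ 2| ^ (-(2*θ)))
            * (‖A ξ‖₊ : ℝ≥0∞) ^ 2) ^ ((1:ℝ)/2) := by
        refine ENNReal.rpow_le_rpow ?_ (by norm_num)
        calc (∫⁻ ξ, ENNReal.ofReal ((φ ((2:ℝ) ^ (-k) * hmod ξ)) ^ 2 *
              (φ ((2:ℝ) ^ (-ℓ) * |ξ 2|)) ^ 2) * (‖A ξ‖₊ : ℝ≥0∞) ^ 2)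
            ≤ ∫⁻ ξ, (ENNReal.ofReal 16 * E (2 * s)) *
              (ENNReal.ofReal (hmod ξ ^ (-1 + 2*θ) * |ξ 2| ^ (-(2*θ)))
                * (‖A ξ‖₊ : ℝ≥0∞) ^ 2) := lintegral_mono key
          _ = _ := lintegral_const_mul' _ _
              (ENNReal.mul_ne_top ENNReal.ofReal_ne_top (E_ne_top _))
    _ = ENNReal.ofReal 4 * E s *
          (∫⁻ ξ, ENNReal.ofReal (hmod ξ ^ (-1 + 2*θ) * |ξ 2| ^ (-(2*θ)))
            * (‖A ξ‖₊ : ℝ≥0∞) ^ 2) ^ ((1:ℝ)/2) := by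
        rw [ENNReal.mul_rpow_of_nonneg _ _ (by norm_num : (0:ℝ) ≤ 1/2),
          ENNReal.mul_rpow_of_nonneg _ _ (by norm_num : (0:ℝ) ≤ 1/2),
          pow_half_16, E_rpow]
        rw [show 2 * s * (1/2) = s from by ring]

set_option maxHeartbeats 1000000 in
theorem block_bound2 (θ : ℝ) (hθ0 : 0 < θ) (hθ : θ < 1/2)
    (φ : ℝ → ℝ) (hφsupp : ∀ τ : ℝ, (|τ| < 3/4 ∨ 8/3 < |τ|) → φ τ = 0)
    (hφbd : ∀ τ : ℝ, |φ τ| ≤ 1) (k ℓ : ℤ) (A : (Fin 3 → ℝ) → ℂ) :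
    blockL2 φ k ℓ A ≤ ENNReal.ofReal 4 *
      E ((k:ℝ) * (1/2 - θ) + (ℓ:ℝ) * θ - max (k:ℝ) (ℓ:ℝ)) *
      (∫⁻ ξ, ENNReal.ofReal (hmod ξ ^ (-1 + 2*θ) * |ξ 2| ^ (-(2*θ)) * fmod ξ ^ 2)
        * (‖A ξ‖₊ : ℝ≥0∞) ^ 2) ^ ((1:ℝ)/2) := by
  set s : ℝ := (k:ℝ) * (1/2 - θ) + (ℓ:ℝ) * θ - max (k:ℝ) (ℓ:ℝ) with hs
  have key : ∀ ξ : Fin 3 → ℝ,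
      ENNReal.ofReal ((φ ((2:ℝ) ^ (-k) * hmod ξ)) ^ 2 * (φ ((2:ℝ) ^ (-ℓ) * |ξ 2|)) ^ 2)
        * (‖A ξ‖₊ : ℝ≥0∞) ^ 2
      ≤ (ENNReal.ofReal 16 * E (2 * s)) *
        (ENNReal.ofReal (hmod ξ ^ (-1 + 2*θ) * |ξ 2| ^ (-(2*θ)) * fmod ξ ^ 2)
          * (‖A ξ‖₊ : ℝ≥0∞) ^ 2) := by
    intro ξ
    rcases eq_or_ne (φ ((2:ℝ) ^ (-k) * hmod ξ)) 0 with h1 | h1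
    · rw [h1]; simp
    rcases eq_or_ne (φ ((2:ℝ) ^ (-ℓ) * |ξ 2|)) 0 with h2 | h2
    · rw [h2]; simp
    obtain ⟨ha1, ha2⟩ := support_bounds φ hφsupp k _ (Real.sqrt_nonneg _) h1
    obtain ⟨hb1, hb2⟩ := support_bounds φ hφsupp ℓ _ (abs_nonneg _) h2
    rw [show (ENNReal.ofReal 16 * E (2 * s)) *
        (ENNReal.ofReal (hmod ξ ^ (-1 + 2*θ) * |ξ 2| ^ (-(2*θ)) * fmod ξ ^ 2)
          * (‖A ξ‖₊ : ℝ≥0∞) ^ 2)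
      = (ENNReal.ofReal 16 * E (2 * s) *
          ENNReal.ofReal (hmod ξ ^ (-1 + 2*θ) * |ξ 2| ^ (-(2*θ)) * fmod ξ ^ 2))
        * (‖A ξ‖₊ : ℝ≥0∞) ^ 2 from by ring]
    refine mul_le_mul_left ?_ _
    rw [E, ← ENNReal.ofReal_mul (by norm_num), ← ENNReal.ofReal_mul (by positivity)]
    refine ENNReal.ofReal_le_ofReal ?_
    have hφ1 : (φ ((2:ℝ) ^ (-k) * hmod ξ)) ^ 2 ≤ 1 := by
      have h := hφbd ((2:ℝ) ^ (-k) * hmod ξ)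
      have h' := abs_nonneg (φ ((2:ℝ) ^ (-k) * hmod ξ))
      nlinarith [sq_abs (φ ((2:ℝ) ^ (-k) * hmod ξ))]
    have hφ2 : (φ ((2:ℝ) ^ (-ℓ) * |ξ 2|)) ^ 2 ≤ 1 := by
      have h := hφbd ((2:ℝ) ^ (-ℓ) * |ξ 2|)
      have h' := abs_nonneg (φ ((2:ℝ) ^ (-ℓ) * |ξ 2|))
      nlinarith [sq_abs (φ ((2:ℝ) ^ (-ℓ) * |ξ 2|))]
    have hw1 : (3/8) * (2:ℝ) ^ ((k:ℝ) * (-1 + 2*θ)) ≤ hmod ξ ^ (-1 + 2*θ) :=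
      rpow_lb ha1 ha2 (by linarith) (by linarith)
    have hw2 : (3/8) * (2:ℝ) ^ ((ℓ:ℝ) * (-(2*θ))) ≤ |ξ 2| ^ (-(2*θ)) :=
      rpow_lb hb1 hb2 (by linarith) (by linarith)
    -- lower bound for fmod
    set M : ℝ := max (k:ℝ) (ℓ:ℝ) with hM
    have hfM : (3/4) * (2:ℝ) ^ M ≤ fmod ξ := by
      rcases le_total (k:ℝ) (ℓ:ℝ) with h | h
      · rw [hM, max_eq_right h]
        calc (3/4) * (2:ℝ) ^ ((ℓ:ℝ)) ≤ |ξ 2| := hb1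
          _ = Real.sqrt ((ξ 2) ^ 2) := (Real.sqrt_sq_eq_abs _).symm
          _ ≤ fmod ξ := Real.sqrt_le_sqrt (by nlinarith [sq_nonneg (ξ 0), sq_nonneg (ξ 1)])
      · rw [hM, max_eq_left h]
        calc (3/4) * (2:ℝ) ^ ((k:ℝ)) ≤ hmod ξ := ha1
          _ ≤ fmod ξ := Real.sqrt_le_sqrt (by nlinarith [sq_nonneg (ξ 2)])
    have hf2 : (9/16) * ((2:ℝ) ^ M * (2:ℝ) ^ M) ≤ fmod ξ ^ 2 := by
      have h0 : (0:ℝ) ≤ (3/4) * (2:ℝ) ^ M := by positivity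
      calc (9/16) * ((2:ℝ) ^ M * (2:ℝ) ^ M) = ((3/4) * (2:ℝ) ^ M) ^ 2 := by ring
        _ ≤ fmod ξ ^ 2 := by nlinarith [hfM, h0]
    have hprod : (9/64) * ((2:ℝ) ^ ((k:ℝ) * (-1 + 2*θ)) * (2:ℝ) ^ ((ℓ:ℝ) * (-(2*θ))))
        ≤ hmod ξ ^ (-1 + 2*θ) * |ξ 2| ^ (-(2*θ)) := by
      have := mul_le_mul hw1 hw2 (by positivity) (le_trans (by positivity) hw1)
      calc (9/64) * ((2:ℝ) ^ ((k:ℝ) * (-1 + 2*θ)) * (2:ℝ) ^ ((ℓ:ℝ) * (-(2*θ))))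
          = (3/8) * (2:ℝ) ^ ((k:ℝ) * (-1 + 2*θ)) * ((3/8) * (2:ℝ) ^ ((ℓ:ℝ) * (-(2*θ)))) := by
            ring
        _ ≤ _ := this
    have hone : (2:ℝ) ^ (2 * s) *
        (((2:ℝ) ^ ((k:ℝ) * (-1 + 2*θ)) * (2:ℝ) ^ ((ℓ:ℝ) * (-(2*θ)))) *
          ((2:ℝ) ^ M * (2:ℝ) ^ M)) = 1 := by
      rw [← Real.rpow_add two_pos, ← Real.rpow_add two_pos, ← Real.rpow_add two_pos,
        ← Real.rpow_add two_pos]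
      convert Real.rpow_zero (2:ℝ) using 2
      rw [hs]; ring
    -- combine
    have hwpos : (0:ℝ) < (2:ℝ) ^ ((k:ℝ) * (-1 + 2*θ)) * (2:ℝ) ^ ((ℓ:ℝ) * (-(2*θ))) :=
      mul_pos (Real.rpow_pos_of_pos two_pos _) (Real.rpow_pos_of_pos two_pos _)
    have hMpos : (0:ℝ) < (2:ℝ) ^ M * (2:ℝ) ^ M :=
      mul_pos (Real.rpow_pos_of_pos two_pos _) (Real.rpow_pos_of_pos two_pos _)
    have h2s : (0:ℝ) < (2:ℝ) ^ (2 * s) := Real.rpow_pos_of_pos two_pos _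
    have hwv : (9/64) * ((2:ℝ) ^ ((k:ℝ) * (-1 + 2*θ)) * (2:ℝ) ^ ((ℓ:ℝ) * (-(2*θ)))) *
        ((9/16) * ((2:ℝ) ^ M * (2:ℝ) ^ M))
        ≤ hmod ξ ^ (-1 + 2*θ) * |ξ 2| ^ (-(2*θ)) * fmod ξ ^ 2 := by
      refine mul_le_mul hprod hf2 (by positivity) ?_
      exact le_trans (by positivity) hprod
    have hbig := mul_le_mul_of_nonneg_left hwv (by positivity : (0:ℝ) ≤ 16 * (2:ℝ) ^ (2*s))
    have heval : 16 * (2:ℝ) ^ (2*s) *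
        ((9/64) * ((2:ℝ) ^ ((k:ℝ) * (-1 + 2*θ)) * (2:ℝ) ^ ((ℓ:ℝ) * (-(2*θ)))) *
          ((9/16) * ((2:ℝ) ^ M * (2:ℝ) ^ M))) = 81/64 := by
      calc 16 * (2:ℝ) ^ (2*s) *
          ((9/64) * ((2:ℝ) ^ ((k:ℝ) * (-1 + 2*θ)) * (2:ℝ) ^ ((ℓ:ℝ) * (-(2*θ)))) *
            ((9/16) * ((2:ℝ) ^ M * (2:ℝ) ^ M)))
          = (81/64) * ((2:ℝ) ^ (2 * s) *
            (((2:ℝ) ^ ((k:ℝ) * (-1 + 2*θ)) * (2:ℝ) ^ ((ℓ:ℝ) * (-(2*θ)))) *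
              ((2:ℝ) ^ M * (2:ℝ) ^ M))) := by ring
        _ = 81/64 := by rw [hone]; norm_num
    have hsq : (φ ((2:ℝ) ^ (-k) * hmod ξ)) ^ 2 * (φ ((2:ℝ) ^ (-ℓ) * |ξ 2|)) ^ 2 ≤ 1 := by
      nlinarith [sq_nonneg (φ ((2:ℝ) ^ (-k) * hmod ξ)), sq_nonneg (φ ((2:ℝ) ^ (-ℓ) * |ξ 2|))]
    linarith [hbig, heval.symm.le]
  calc blockL2 φ k ℓ A
      ≤ ((ENNReal.ofReal 16 * E (2 * s)) *
          ∫⁻ ξ, ENNReal.ofReal (hmod ξ ^ (-1 + 2*θ) * |ξ 2| ^ (-(2*θ)) * fmod ξ ^ 2)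
            * (‖A ξ‖₊ : ℝ≥0∞) ^ 2) ^ ((1:ℝ)/2) := by
        refine ENNReal.rpow_le_rpow ?_ (by norm_num)
        calc (∫⁻ ξ, ENNReal.ofReal ((φ ((2:ℝ) ^ (-k) * hmod ξ)) ^ 2 *
              (φ ((2:ℝ) ^ (-ℓ) * |ξ 2|)) ^ 2) * (‖A ξ‖₊ : ℝ≥0∞) ^ 2)
            ≤ ∫⁻ ξ, (ENNReal.ofReal 16 * E (2 * s)) *
              (ENNReal.ofReal (hmod ξ ^ (-1 + 2*θ) * |ξ 2| ^ (-(2*θ)) * fmod ξ ^ 2)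
                * (‖A ξ‖₊ : ℝ≥0∞) ^ 2) := lintegral_mono key
          _ = _ := lintegral_const_mul' _ _
              (ENNReal.mul_ne_top ENNReal.ofReal_ne_top (E_ne_top _))
    _ = ENNReal.ofReal 4 * E s *
          (∫⁻ ξ, ENNReal.ofReal (hmod ξ ^ (-1 + 2*θ) * |ξ 2| ^ (-(2*θ)) * fmod ξ ^ 2)
            * (‖A ξ‖₊ : ℝ≥0∞) ^ 2) ^ ((1:ℝ)/2) := by
        rw [ENNReal.mul_rpow_of_nonneg _ _ (by norm_num : (0:ℝ) ≤ 1/2),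
          ENNReal.mul_rpow_of_nonneg _ _ (by norm_num : (0:ℝ) ≤ 1/2),
          pow_half_16, E_rpow]
        rw [show 2 * s * (1/2) = s from by ring]


end Stmt10Aux

open Stmt10Aux in
/-- For `(α, θ) ∈ (0,1/2)²` and any `a` with `a, ∇a ∈ H_θ = H^{−1/2+θ,−θ}`:
`‖a‖_{(B⁰_{2,1})_h(B^{1/2−α}_{2,1})_v} ≤ C ‖a‖_{H_θ}^α ‖∇a‖_{H_θ}^{1−α}`, where the
anisotropic Besov norm is `Σ_{k,ℓ} 2^{ℓ(1/2−α)} ‖Δ^h_kΔ^v_ℓ a‖_{L²}` (stated on the Fourier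
side with `A = â` and dyadic profile `φ` supported in `{3/4 ≤ |τ| ≤ 8/3}`, `|φ| ≤ 1`). -/
theorem stmt10 (α θ : ℝ) (hα0 : 0 < α) (hα : α < 1/2) (hθ0 : 0 < θ) (hθ : θ < 1/2)
    (φ : ℝ → ℝ) (hφsupp : ∀ τ : ℝ, (|τ| < 3/4 ∨ 8/3 < |τ|) → φ τ = 0)
    (hφbd : ∀ τ : ℝ, |φ τ| ≤ 1) :
    ∃ C : ℝ≥0, 0 < C ∧ ∀ A : (Fin 3 → ℝ) → ℂ,
      (∑' k : ℤ, ∑' ℓ : ℤ,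
          ENNReal.ofReal ((2:ℝ) ^ ((ℓ : ℝ) * (1/2 - α))) * blockL2 φ k ℓ A)
        ≤ C * (∫⁻ ξ, ENNReal.ofReal (hmod ξ ^ (-1 + 2*θ) * |ξ 2| ^ (-(2*θ)))
                * (‖A ξ‖₊ : ℝ≥0∞) ^ 2) ^ (α / 2)
            * (∫⁻ ξ, ENNReal.ofReal (hmod ξ ^ (-1 + 2*θ) * |ξ 2| ^ (-(2*θ)) * fmod ξ ^ 2)
                * (‖A ξ‖₊ : ℝ≥0∞) ^ 2) ^ ((1 - α) / 2) := by
  set c₀ : ℝ := min (1/2 - θ) (1/2 - α + θ) with hc₀def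
  have hc₀pos : 0 < c₀ := lt_min (by linarith) (by linarith)
  set m₀ : ℝ := min (1 - α) α with hm₀def
  have hm₀pos : 0 < m₀ := lt_min (by linarith) hα0
  have hsub_ne_top : ∀ c : ℝ, (1 : ℝ≥0∞) - E (-c) ≠ ⊤ :=
    fun c => (lt_of_le_of_lt tsub_le_self one_lt_top).ne
  set Ctot : ℝ≥0∞ :=
    ENNReal.ofReal 4 * (4 * (1 - E (-c₀))⁻¹) * (4 * (1 - E (-m₀))⁻¹) with hCtotdef
  have hCne0 : Ctot ≠ 0 := by
    rw [hCtotdef]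
    refine mul_ne_zero (mul_ne_zero ?_ (mul_ne_zero ?_ ?_)) (mul_ne_zero ?_ ?_)
    · simp
    · simp
    · exact ENNReal.inv_ne_zero.mpr (hsub_ne_top c₀)
    · simp
    · exact ENNReal.inv_ne_zero.mpr (hsub_ne_top m₀)
  have hCnetop : Ctot ≠ ⊤ := by
    rw [hCtotdef]
    refine ENNReal.mul_ne_top (ENNReal.mul_ne_top ENNReal.ofReal_ne_top
      (ENNReal.mul_ne_top (by simp) (geom_ne_top hc₀pos)))
      (ENNReal.mul_ne_top (by simp) (geom_ne_top hm₀pos))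
  refine ⟨Ctot.toNNReal, ENNReal.toNNReal_pos hCne0 hCnetop, fun A => ?_⟩
  have hC : (Ctot.toNNReal : ℝ≥0∞) = Ctot := ENNReal.coe_toNNReal hCnetop
  rw [hC]
  set X : ℝ≥0∞ := ∫⁻ ξ, ENNReal.ofReal (hmod ξ ^ (-1 + 2*θ) * |ξ 2| ^ (-(2*θ)))
      * (‖A ξ‖₊ : ℝ≥0∞) ^ 2 with hXdef
  set Y : ℝ≥0∞ := ∫⁻ ξ, ENNReal.ofReal (hmod ξ ^ (-1 + 2*θ) * |ξ 2| ^ (-(2*θ)) * fmod ξ ^ 2)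
      * (‖A ξ‖₊ : ℝ≥0∞) ^ 2 with hYdef
  have B1 : ∀ k ℓ : ℤ, blockL2 φ k ℓ A ≤
      ENNReal.ofReal 4 * E ((k:ℝ) * (1/2 - θ) + (ℓ:ℝ) * θ) * X ^ ((1:ℝ)/2) := by
    intro k ℓ
    have h := block_bound1 θ hθ0 hθ φ hφsupp hφbd k ℓ A
    rw [← hXdef] at h
    exact h
  have B2 : ∀ k ℓ : ℤ, blockL2 φ k ℓ A ≤
      ENNReal.ofReal 4 * E ((k:ℝ) * (1/2 - θ) + (ℓ:ℝ) * θ - max (k:ℝ) (ℓ:ℝ)) *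
        Y ^ ((1:ℝ)/2) := by
    intro k ℓ
    have h := block_bound2 θ hθ0 hθ φ hφsupp hφbd k ℓ A
    rw [← hYdef] at h
    exact h
  by_cases hX0 : X = 0
  · have hzero : ∀ k ℓ : ℤ, blockL2 φ k ℓ A = 0 := by
      intro k ℓ
      refine le_zero_iff.mp ?_
      have h := B1 k ℓ
      rw [hX0, ENNReal.zero_rpow_of_pos (by norm_num : (0:ℝ) < 1/2), mul_zero] at h
      exact h
    have hL : (∑' k : ℤ, ∑' ℓ : ℤ,
        ENNReal.ofReal ((2:ℝ) ^ ((ℓ : ℝ) * (1/2 - α))) * blockL2 φ k ℓ A) = 0 := by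
      simp [hzero]
    rw [hL]
    exact zero_le
  by_cases hY0 : Y = 0
  · have hzero : ∀ k ℓ : ℤ, blockL2 φ k ℓ A = 0 := by
      intro k ℓ
      refine le_zero_iff.mp ?_
      have h := B2 k ℓ
      rw [hY0, ENNReal.zero_rpow_of_pos (by norm_num : (0:ℝ) < 1/2), mul_zero] at h
      exact h
    have hL : (∑' k : ℤ, ∑' ℓ : ℤ,
        ENNReal.ofReal ((2:ℝ) ^ ((ℓ : ℝ) * (1/2 - α))) * blockL2 φ k ℓ A) = 0 := by
      simp [hzero]
    rw [hL]
    exact zero_le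
  by_cases hXt : X = ⊤
  · have h1 : X ^ (α/2) = ⊤ := by
      rw [hXt]
      exact ENNReal.top_rpow_of_pos (by linarith)
    have h2 : Y ^ ((1-α)/2) ≠ 0 := by
      intro h
      rcases ENNReal.rpow_eq_zero_iff.mp h with ⟨h', _⟩ | ⟨_, h'⟩
      · exact hY0 h'
      · linarith
    have : Ctot * X ^ (α/2) * Y ^ ((1-α)/2) = ⊤ := by
      rw [h1, ENNReal.mul_top hCne0, ENNReal.top_mul h2]
    rw [this]
    exact le_top
  by_cases hYt : Y = ⊤
  · have h1 : Y ^ ((1-α)/2) = ⊤ := by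
      rw [hYt]
      exact ENNReal.top_rpow_of_pos (by linarith)
    have h2 : X ^ (α/2) ≠ 0 := by
      intro h
      rcases ENNReal.rpow_eq_zero_iff.mp h with ⟨h', _⟩ | ⟨_, h'⟩
      · exact hX0 h'
      · linarith
    have : Ctot * X ^ (α/2) * Y ^ ((1-α)/2) = ⊤ := by
      rw [h1, ENNReal.mul_top (mul_ne_zero hCne0 h2)]
    rw [this]
    exact le_top
  -- main case
  set P : ℝ≥0∞ := X ^ ((1:ℝ)/2) with hPdef
  set Q : ℝ≥0∞ := Y ^ ((1:ℝ)/2) with hQdef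
  have hP0 : P ≠ 0 := by
    rw [hPdef]
    intro h
    rcases ENNReal.rpow_eq_zero_iff.mp h with ⟨h', _⟩ | ⟨_, h'⟩
    · exact hX0 h'
    · norm_num at h'
  have hPt : P ≠ ⊤ := by
    rw [hPdef]
    intro h
    rcases ENNReal.rpow_eq_top_iff.mp h with ⟨_, h'⟩ | ⟨h', _⟩
    · norm_num at h'
    · exact hXt h'
  have hQ0 : Q ≠ 0 := by
    rw [hQdef]
    intro h
    rcases ENNReal.rpow_eq_zero_iff.mp h with ⟨h', _⟩ | ⟨_, h'⟩
    · exact hY0 h'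
    · norm_num at h'
  have hQt : Q ≠ ⊤ := by
    rw [hQdef]
    intro h
    rcases ENNReal.rpow_eq_top_iff.mp h with ⟨_, h'⟩ | ⟨h', _⟩
    · norm_num at h'
    · exact hYt h'
  set m : ℤ → ℝ≥0∞ := fun n => min (E ((n:ℝ) * (1 - α)) * P) (E (-(n:ℝ) * α) * Q)
    with hmdef
  have hS : ∀ k ℓ : ℤ,
      ENNReal.ofReal ((2:ℝ) ^ ((ℓ : ℝ) * (1/2 - α))) * blockL2 φ k ℓ A
      ≤ ENNReal.ofReal 4 * (E (-(|(k:ℝ) - (ℓ:ℝ)| * c₀)) * (m k + m ℓ)) := by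
    intro k ℓ
    set s : ℝ := (k:ℝ) * (1/2 - θ) + (ℓ:ℝ) * θ with hsdef
    have hmin : blockL2 φ k ℓ A ≤ ENNReal.ofReal 4 *
        min (E s * P) (E (s - max (k:ℝ) (ℓ:ℝ)) * Q) := by
      rw [mul_min']
      refine le_min ?_ ?_
      · have h := B1 k ℓ
        rw [mul_assoc] at h
        exact h
      · have h := B2 k ℓ
        rw [mul_assoc] at h
        exact h
    have step1 : ENNReal.ofReal ((2:ℝ) ^ ((ℓ : ℝ) * (1/2 - α))) * blockL2 φ k ℓ A
        ≤ ENNReal.ofReal 4 * (E ((ℓ:ℝ) * (1/2 - α)) *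
            min (E s * P) (E (s - max (k:ℝ) (ℓ:ℝ)) * Q)) := by
      have : ENNReal.ofReal ((2:ℝ) ^ ((ℓ : ℝ) * (1/2 - α))) = E ((ℓ:ℝ) * (1/2 - α)) := rfl
      rw [this]
      calc E ((ℓ:ℝ) * (1/2 - α)) * blockL2 φ k ℓ A
          ≤ E ((ℓ:ℝ) * (1/2 - α)) * (ENNReal.ofReal 4 *
              min (E s * P) (E (s - max (k:ℝ) (ℓ:ℝ)) * Q)) := mul_le_mul_right hmin _
        _ = ENNReal.ofReal 4 * (E ((ℓ:ℝ) * (1/2 - α)) *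
              min (E s * P) (E (s - max (k:ℝ) (ℓ:ℝ)) * Q)) := by ring
    refine step1.trans (mul_le_mul_right ?_ _)
    -- now: E t * min (E s * P) (E (s - M) * Q) ≤ E (-(|k-ℓ| c₀)) * (m k + m ℓ)
    rcases le_total k ℓ with h | h
    · have hcast : (k:ℝ) ≤ (ℓ:ℝ) := by exact_mod_cast h
      have hmax : max (k:ℝ) (ℓ:ℝ) = (ℓ:ℝ) := max_eq_right hcast
      have eu : (ℓ:ℝ) * (1/2 - α) + s
          = (-(((ℓ:ℝ) - k) * (1/2 - θ))) + (ℓ:ℝ) * (1 - α) := by rw [hsdef]; ring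
      have ev : (ℓ:ℝ) * (1/2 - α) + (s - max (k:ℝ) (ℓ:ℝ))
          = (-(((ℓ:ℝ) - k) * (1/2 - θ))) + (-(ℓ:ℝ) * α) := by rw [hsdef, hmax]; ring
      calc E ((ℓ:ℝ) * (1/2 - α)) * min (E s * P) (E (s - max (k:ℝ) (ℓ:ℝ)) * Q)
          = min (E ((ℓ:ℝ) * (1/2 - α) + s) * P)
              (E ((ℓ:ℝ) * (1/2 - α) + (s - max (k:ℝ) (ℓ:ℝ))) * Q) := by
            rw [mul_min', ← mul_assoc, ← E_add, ← mul_assoc, ← E_add]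
        _ = E (-(((ℓ:ℝ) - k) * (1/2 - θ))) * m ℓ := by
            rw [eu, ev, E_add, E_add, mul_assoc, mul_assoc, ← mul_min', hmdef]
        _ ≤ E (-(|(k:ℝ) - (ℓ:ℝ)| * c₀)) * (m k + m ℓ) := by
            refine mul_le_mul (E_mono ?_) (self_le_add_left _ _) zero_le zero_le
            have habs : |(k:ℝ) - (ℓ:ℝ)| = (ℓ:ℝ) - k := by
              rw [abs_of_nonpos (by linarith)]; ring
            rw [habs]
            have hm1 : c₀ ≤ 1/2 - θ := min_le_left _ _
            nlinarith [sub_nonneg.mpr hcast]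
    · have hcast : (ℓ:ℝ) ≤ (k:ℝ) := by exact_mod_cast h
      have hmax : max (k:ℝ) (ℓ:ℝ) = (k:ℝ) := max_eq_left hcast
      have eu : (ℓ:ℝ) * (1/2 - α) + s
          = (-(((k:ℝ) - ℓ) * (1/2 - α + θ))) + (k:ℝ) * (1 - α) := by rw [hsdef]; ring
      have ev : (ℓ:ℝ) * (1/2 - α) + (s - max (k:ℝ) (ℓ:ℝ))
          = (-(((k:ℝ) - ℓ) * (1/2 - α + θ))) + (-(k:ℝ) * α) := by rw [hsdef, hmax]; ring
      calc E ((ℓ:ℝ) * (1/2 - α)) * min (E s * P) (E (s - max (k:ℝ) (ℓ:ℝ)) * Q)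
          = min (E ((ℓ:ℝ) * (1/2 - α) + s) * P)
              (E ((ℓ:ℝ) * (1/2 - α) + (s - max (k:ℝ) (ℓ:ℝ))) * Q) := by
            rw [mul_min', ← mul_assoc, ← E_add, ← mul_assoc, ← E_add]
        _ = E (-(((k:ℝ) - ℓ) * (1/2 - α + θ))) * m k := by
            rw [eu, ev, E_add, E_add, mul_assoc, mul_assoc, ← mul_min', hmdef]
        _ ≤ E (-(|(k:ℝ) - (ℓ:ℝ)| * c₀)) * (m k + m ℓ) := by
            refine mul_le_mul (E_mono ?_) (self_le_add_right _ _) zero_le zero_le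
            have habs : |(k:ℝ) - (ℓ:ℝ)| = (k:ℝ) - ℓ := abs_of_nonneg (by linarith)
            rw [habs]
            have hm1 : c₀ ≤ 1/2 - α + θ := min_le_right _ _
            nlinarith [sub_nonneg.mpr hcast]
  -- sum it up
  have hG := sumZ hc₀pos
  calc (∑' k : ℤ, ∑' ℓ : ℤ,
        ENNReal.ofReal ((2:ℝ) ^ ((ℓ : ℝ) * (1/2 - α))) * blockL2 φ k ℓ A)
      ≤ ∑' k : ℤ, ∑' ℓ : ℤ,
        ENNReal.ofReal 4 * (E (-(|(k:ℝ) - (ℓ:ℝ)| * c₀)) * (m k + m ℓ)) :=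
        ENNReal.tsum_le_tsum fun k => ENNReal.tsum_le_tsum fun ℓ => hS k ℓ
    _ = ENNReal.ofReal 4 * ∑' k : ℤ, ∑' ℓ : ℤ,
        E (-(|(k:ℝ) - (ℓ:ℝ)| * c₀)) * (m k + m ℓ) := by
        rw [← ENNReal.tsum_mul_left]
        refine tsum_congr fun k => ?_
        rw [← ENNReal.tsum_mul_left]
    _ = ENNReal.ofReal 4 * ((∑' k : ℤ, ∑' ℓ : ℤ, E (-(|(k:ℝ) - (ℓ:ℝ)| * c₀)) * m k)
          + (∑' k : ℤ, ∑' ℓ : ℤ, E (-(|(k:ℝ) - (ℓ:ℝ)| * c₀)) * m ℓ)) := by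
        congr 1
        rw [← ENNReal.tsum_add]
        refine tsum_congr fun k => ?_
        rw [← ENNReal.tsum_add]
        refine tsum_congr fun ℓ => ?_
        rw [mul_add]
    _ ≤ ENNReal.ofReal 4 * ((2 * (1 - E (-c₀))⁻¹ * ∑' n : ℤ, m n)
          + (2 * (1 - E (-c₀))⁻¹ * ∑' n : ℤ, m n)) := by
        refine mul_le_mul_right (add_le_add ?_ ?_) _
        · calc (∑' k : ℤ, ∑' ℓ : ℤ, E (-(|(k:ℝ) - (ℓ:ℝ)| * c₀)) * m k)
              = ∑' k : ℤ, (∑' ℓ : ℤ, E (-(|(ℓ:ℝ) - (k:ℝ)| * c₀))) * m k := by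
                refine tsum_congr fun k => ?_
                rw [ENNReal.tsum_mul_right]
                congr 1
                refine tsum_congr fun ℓ => ?_
                rw [abs_sub_comm]
            _ ≤ ∑' k : ℤ, (2 * (1 - E (-c₀))⁻¹) * m k :=
                ENNReal.tsum_le_tsum fun k => mul_le_mul_left (hG k) _
            _ = 2 * (1 - E (-c₀))⁻¹ * ∑' n : ℤ, m n := ENNReal.tsum_mul_left
        · calc (∑' k : ℤ, ∑' ℓ : ℤ, E (-(|(k:ℝ) - (ℓ:ℝ)| * c₀)) * m ℓ)
              = ∑' ℓ : ℤ, ∑' k : ℤ, E (-(|(k:ℝ) - (ℓ:ℝ)| * c₀)) * m ℓ :=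
                ENNReal.tsum_comm
            _ = ∑' ℓ : ℤ, (∑' k : ℤ, E (-(|(k:ℝ) - (ℓ:ℝ)| * c₀))) * m ℓ := by
                refine tsum_congr fun ℓ => ?_
                rw [ENNReal.tsum_mul_right]
            _ ≤ ∑' ℓ : ℤ, (2 * (1 - E (-c₀))⁻¹) * m ℓ :=
                ENNReal.tsum_le_tsum fun ℓ => mul_le_mul_left (hG ℓ) _
            _ = 2 * (1 - E (-c₀))⁻¹ * ∑' n : ℤ, m n := ENNReal.tsum_mul_left
    _ = (ENNReal.ofReal 4 * (4 * (1 - E (-c₀))⁻¹)) * ∑' n : ℤ, m n := by ring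
    _ ≤ (ENNReal.ofReal 4 * (4 * (1 - E (-c₀))⁻¹)) *
          (4 * (1 - E (-(min (1 - α) α)))⁻¹ * (P ^ α * Q ^ (1 - α))) := by
        refine mul_le_mul_right ?_ _
        rw [hmdef]
        exact sum_min (by linarith) hα0 (by ring) hP0 hPt hQ0 hQt
    _ = Ctot * X ^ (α/2) * Y ^ ((1-α)/2) := by
        rw [hPdef, hQdef, ← ENNReal.rpow_mul, ← ENNReal.rpow_mul,
          show (1:ℝ)/2 * α = α/2 from by ring,
          show (1:ℝ)/2 * (1-α) = (1-α)/2 from by ring, hCtotdef, hm₀def]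
        ring
end
end

section
/- Let θ ∈ (0, 1/2) and p > 2 with θ < 1/2 − 1/p. Then for any tempered distribution a with a ∈ H_θ and ∇a ∈ H_θ, one has ‖a‖_{H^{θ, 1/2−θ−1/p}} ≤ ‖a‖_{H_θ}^{1/p} · ‖∇a‖_{H_θ}^{1−1/p}. -/
open MeasureTheory ENNReal
open scoped NNReal

noncomputable section

/-- Measurability-free weighted Hölder inequality: if `w0 ≤ w1^r * w2^(1-r)` pointwise
with measurable finite weights, then for ANY (possibly non-measurable) `m`,
`∫ w0 m ≤ (∫ w1 m)^r (∫ w2 m)^(1-r)`. -/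
lemma lintegral_weight_holder {α : Type*} [MeasurableSpace α] (μ : Measure α)
    {w0 w1 w2 : α → ℝ≥0∞} (hw0m : Measurable w0) (hw1 : Measurable w1) (hw2 : Measurable w2)
    (hw0 : ∀ x, w0 x ≠ ⊤)
    {r : ℝ} (hr0 : 0 < r) (hr1 : r < 1)
    (hle : ∀ x, w0 x ≤ w1 x ^ r * w2 x ^ (1 - r))
    (m : α → ℝ≥0∞) :
    ∫⁻ x, w0 x * m x ∂μ ≤
      (∫⁻ x, w1 x * m x ∂μ) ^ r * (∫⁻ x, w2 x * m x ∂μ) ^ (1 - r) := by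
  rw [lintegral_def]
  refine iSup₂_le fun φ hφ => ?_
  set m' : α → ℝ≥0∞ := fun x => φ x / w0 x with hm'def
  have hm'meas : Measurable m' := φ.measurable.div hw0m
  have hm'le : ∀ x, m' x ≤ m x := by
    intro x
    rcases eq_or_ne (w0 x) 0 with h0 | h0
    · have : φ x = 0 := by
        have := hφ x; simp only [h0, zero_mul] at this; simpa using this
      simp [hm'def, this]
    · exact (ENNReal.div_le_iff h0 (hw0 x)).2 (by rw [mul_comm]; exact hφ x)
  have hφle : ∀ x, φ x ≤ w0 x * m' x := by
    intro x
    rcases eq_or_ne (w0 x) 0 with h0 | h0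
    · have : φ x = 0 := by
        have := hφ x; simp only [h0, zero_mul] at this; simpa using this
      simp [this]
    · rw [hm'def]; rw [ENNReal.mul_div_cancel h0 (hw0 x)]
  have hconj : (1/r).HolderConjugate (1/(1-r)) := by
    constructor
    · rw [one_div, one_div, inv_inv, inv_inv, inv_one]; ring
    · positivity
    · have : (0:ℝ) < 1 - r := by linarith
      positivity
  set f : α → ℝ≥0∞ := fun x => (w1 x * m' x) ^ r with hfdef
  set g : α → ℝ≥0∞ := fun x => (w2 x * m' x) ^ (1-r) with hgdef
  have hfm : Measurable f := (hw1.mul hm'meas).pow_const _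
  have hgm : Measurable g := (hw2.mul hm'meas).pow_const _
  have key := ENNReal.lintegral_mul_le_Lp_mul_Lq μ hconj hfm.aemeasurable hgm.aemeasurable
  have hfp : ∀ x, f x ^ (1/r) = w1 x * m' x := by
    intro x
    rw [hfdef, ← ENNReal.rpow_mul, mul_one_div, div_self hr0.ne', ENNReal.rpow_one]
  have hgq : ∀ x, g x ^ (1/(1-r)) = w2 x * m' x := by
    intro x
    have h1r : (1:ℝ) - r ≠ 0 := by linarith
    rw [hgdef, ← ENNReal.rpow_mul, mul_one_div, div_self h1r, ENNReal.rpow_one]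
  calc φ.lintegral μ = ∫⁻ x, φ x ∂μ := (φ.lintegral_eq_lintegral μ).symm
    _ ≤ ∫⁻ x, (f * g) x ∂μ := by
        refine lintegral_mono fun x => (hφle x).trans ?_
        simp only [Pi.mul_apply, hfdef, hgdef]
        rw [ENNReal.mul_rpow_of_nonneg _ _ hr0.le,
          ENNReal.mul_rpow_of_nonneg _ _ (by linarith : (0:ℝ) ≤ 1 - r)]
        calc w0 x * m' x ≤ (w1 x ^ r * w2 x ^ (1-r)) * m' x :=
              mul_le_mul_left (hle x) _
          _ = w1 x ^ r * (w2 x ^ (1-r) * (m' x ^ r * m' x ^ (1-r))) := by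
              rw [← ENNReal.rpow_add_of_nonneg r (1-r) hr0.le (by linarith : (0:ℝ) ≤ 1 - r),
                show r + (1-r) = (1:ℝ) by ring, ENNReal.rpow_one]
              ring
          _ = w1 x ^ r * m' x ^ r * (w2 x ^ (1-r) * m' x ^ (1-r)) := by ring
    _ ≤ (∫⁻ x, f x ^ (1/r) ∂μ) ^ (1/(1/r)) * (∫⁻ x, g x ^ (1/(1-r)) ∂μ) ^ (1/(1/(1-r))) := key
    _ = (∫⁻ x, w1 x * m' x ∂μ) ^ r * (∫⁻ x, w2 x * m' x ∂μ) ^ (1-r) := by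
        simp only [hfp, hgq, one_div_one_div]
    _ ≤ (∫⁻ x, w1 x * m x ∂μ) ^ r * (∫⁻ x, w2 x * m x ∂μ) ^ (1-r) := by
        have h1 : ∫⁻ x, w1 x * m' x ∂μ ≤ ∫⁻ x, w1 x * m x ∂μ :=
          lintegral_mono fun x => mul_le_mul_right (hm'le x) _
        have h2 : ∫⁻ x, w2 x * m' x ∂μ ≤ ∫⁻ x, w2 x * m x ∂μ :=
          lintegral_mono fun x => mul_le_mul_right (hm'le x) _
        exact mul_le_mul' (ENNReal.rpow_le_rpow h1 hr0.le)
          (ENNReal.rpow_le_rpow h2 (by linarith))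

/-- The pointwise real-weight inequality: `|ξ_h|^{2θ}|ξ₃|^{1−2θ−2/p} ≤
(|ξ_h|^{−1+2θ}|ξ₃|^{−2θ})^{1/p} (|ξ_h|^{−1+2θ}|ξ₃|^{−2θ}|ξ|²)^{1−1/p}`. -/
lemma real_ptwise (θ p h t f : ℝ) (hθ0 : 0 < θ) (hp : 2 < p)
    (hθp : θ < 1/2 - 1/p) (hh : 0 ≤ h) (ht : 0 ≤ t) (hf : 0 ≤ f)
    (hhf : h ≤ f) (htf : t ≤ f) :
    h ^ (2*θ) * t ^ (2*(1/2 - θ - 1/p)) ≤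
      (h ^ (-1 + 2*θ) * t ^ (-(2*θ))) ^ (1/p)
        * (h ^ (-1 + 2*θ) * t ^ (-(2*θ)) * f ^ 2) ^ (1 - 1/p) := by
  have hp0 : (0:ℝ) < p := by linarith
  have h2p : 2/p < 1 := (div_lt_one hp0).2 hp
  rcases eq_or_lt_of_le hh with h0 | h0
  · rw [← h0, Real.zero_rpow (by positivity : 2*θ ≠ 0), zero_mul]
    positivity
  rcases eq_or_lt_of_le ht with t0 | t0
  · rw [← t0, Real.zero_rpow ?_, mul_zero]
    · positivity
    · have : 0 < 2*(1/2 - θ - 1/p) := by linarith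
      exact this.ne'
  have hf0 : 0 < f := lt_of_lt_of_le h0 hhf
  set a : ℝ := h ^ (-1 + 2*θ) * t ^ (-(2*θ)) with ha_def
  have ha : 0 < a := by positivity
  have e2 : (a * f ^ 2) ^ (1 - 1/p) = a ^ (1 - 1/p) * f ^ (2 - 2/p) := by
    rw [Real.mul_rpow ha.le (sq_nonneg f)]
    congr 1
    rw [← Real.rpow_natCast f 2, ← Real.rpow_mul hf]
    norm_num
    ring_nf
  have eRHS : a ^ (1/p) * (a ^ (1 - 1/p) * f ^ (2 - 2/p)) = a * f ^ (2 - 2/p) := by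
    rw [← mul_assoc, ← Real.rpow_add ha, show 1/p + (1 - 1/p) = (1:ℝ) by ring,
      Real.rpow_one]
  have key : h * t ^ (1 - 2/p) ≤ f ^ (2 - 2/p) := by
    have : f ^ ((2:ℝ) - 2/p) = f * f ^ ((1:ℝ) - 2/p) := by
      rw [show (2:ℝ) - 2/p = 1 + (1 - 2/p) by ring, Real.rpow_add hf0,
        Real.rpow_one]
    rw [this]
    exact mul_le_mul hhf (Real.rpow_le_rpow ht htf (by linarith))
      (Real.rpow_nonneg ht _) hf
  have eLHS : a * (h * t ^ (1 - 2/p)) = h ^ (2*θ) * t ^ (2*(1/2 - θ - 1/p)) := by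
    rw [ha_def]
    rw [show h ^ (-1 + 2*θ) * t ^ (-(2*θ)) * (h * t ^ (1 - 2/p))
        = (h ^ (-1 + 2*θ) * h ^ (1:ℝ)) * (t ^ (-(2*θ)) * t ^ (1 - 2/p)) by
          rw [Real.rpow_one]; ring]
    rw [← Real.rpow_add h0, ← Real.rpow_add t0,
      show (-1 + 2*θ) + 1 = 2*θ by ring,
      show (-(2*θ)) + (1 - 2/p) = 2*(1/2 - θ - 1/p) by ring]
  calc h ^ (2*θ) * t ^ (2*(1/2 - θ - 1/p)) = a * (h * t ^ (1 - 2/p)) := eLHS.symm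
    _ ≤ a * f ^ (2 - 2/p) := mul_le_mul_of_nonneg_left key ha.le
    _ = a ^ (1/p) * (a * f ^ 2) ^ (1 - 1/p) := by rw [e2, eRHS]

/-- For `θ ∈ (0, 1/2)`, `p > 2` with `θ < 1/2 − 1/p`, and any `a` (with `A = â`):
`‖a‖_{H^{θ, 1/2−θ−1/p}} ≤ ‖a‖_{H_θ}^{1/p} ‖∇a‖_{H_θ}^{1−1/p}` (squared-norm form). -/
theorem stmt12 (θ p : ℝ) (hθ0 : 0 < θ) (hθ : θ < 1/2) (hp : 2 < p)
    (hθp : θ < 1/2 - 1/p) (A : (Fin 3 → ℝ) → ℂ) :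
    ∫⁻ ξ, ENNReal.ofReal (hmod ξ ^ (2*θ) * |ξ 2| ^ (2*(1/2 - θ - 1/p)))
        * (‖A ξ‖₊ : ℝ≥0∞) ^ 2
      ≤ (∫⁻ ξ, ENNReal.ofReal (hmod ξ ^ (-1 + 2*θ) * |ξ 2| ^ (-(2*θ)))
            * (‖A ξ‖₊ : ℝ≥0∞) ^ 2) ^ ((1:ℝ)/p)
        * (∫⁻ ξ, ENNReal.ofReal (hmod ξ ^ (-1 + 2*θ) * |ξ 2| ^ (-(2*θ)) * fmod ξ ^ 2)
            * (‖A ξ‖₊ : ℝ≥0∞) ^ 2) ^ (1 - (1:ℝ)/p) := by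
  have hp0 : (0:ℝ) < p := by linarith
  have hr0 : 0 < (1:ℝ)/p := by positivity
  have hr1 : (1:ℝ)/p < 1 := by
    rw [div_lt_one hp0]; linarith
  have hmod_m : Measurable hmod :=
    Real.continuous_sqrt.measurable.comp
      (((measurable_pi_apply 0).pow_const 2).add ((measurable_pi_apply 1).pow_const 2))
  have fmod_m : Measurable fmod :=
    Real.continuous_sqrt.measurable.comp
      ((((measurable_pi_apply 0).pow_const 2).add ((measurable_pi_apply 1).pow_const 2)).add
        ((measurable_pi_apply 2).pow_const 2))
  have habs : Measurable fun ξ : Fin 3 → ℝ => |ξ 2| := (measurable_pi_apply 2).abs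
  have hw0m : Measurable fun ξ : Fin 3 → ℝ =>
      ENNReal.ofReal (hmod ξ ^ (2*θ) * |ξ 2| ^ (2*(1/2 - θ - 1/p))) :=
    ((hmod_m.pow measurable_const).mul (habs.pow measurable_const)).ennreal_ofReal
  have hw1m : Measurable fun ξ : Fin 3 → ℝ =>
      ENNReal.ofReal (hmod ξ ^ (-1 + 2*θ) * |ξ 2| ^ (-(2*θ))) :=
    ((hmod_m.pow measurable_const).mul (habs.pow measurable_const)).ennreal_ofReal
  have hw2m : Measurable fun ξ : Fin 3 → ℝ =>
      ENNReal.ofReal (hmod ξ ^ (-1 + 2*θ) * |ξ 2| ^ (-(2*θ)) * fmod ξ ^ 2) :=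
    (((hmod_m.pow measurable_const).mul (habs.pow measurable_const)).mul (fmod_m.pow_const 2)).ennreal_ofReal
  refine lintegral_weight_holder volume hw0m hw1m hw2m
    (fun ξ => ENNReal.ofReal_ne_top) hr0 hr1 ?_ _
  intro ξ
  have hh : 0 ≤ hmod ξ := Real.sqrt_nonneg _
  have ht : 0 ≤ |ξ 2| := abs_nonneg _
  have hf : 0 ≤ fmod ξ := Real.sqrt_nonneg _
  have hhf : hmod ξ ≤ fmod ξ := by
    unfold hmod fmod
    exact Real.sqrt_le_sqrt (by nlinarith [sq_nonneg (ξ 2)])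
  have htf : |ξ 2| ≤ fmod ξ := by
    rw [← Real.sqrt_sq_eq_abs]
    unfold fmod
    exact Real.sqrt_le_sqrt (by nlinarith [sq_nonneg (ξ 0), sq_nonneg (ξ 1)])
  have hw1nn : 0 ≤ hmod ξ ^ (-1 + 2*θ) * |ξ 2| ^ (-(2*θ)) := by positivity
  have hw2nn : 0 ≤ hmod ξ ^ (-1 + 2*θ) * |ξ 2| ^ (-(2*θ)) * fmod ξ ^ 2 := by positivity
  rw [ENNReal.ofReal_rpow_of_nonneg hw1nn hr0.le,
    ENNReal.ofReal_rpow_of_nonneg hw2nn (by linarith : (0:ℝ) ≤ 1 - 1/p),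
    ← ENNReal.ofReal_mul (by positivity)]
  exact ENNReal.ofReal_le_ofReal
    (real_ptwise θ p (hmod ξ) (|ξ 2|) (fmod ξ) hθ0 hp hθp hh ht hf hhf htf)

end
end
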